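/- For every integer k > 0, let T1 be the unrooted binary phylogenetic tree obtained by suppressing the root (replacing the two edges at the root by a single edge) of the rooted balanced binary tree of height 2k whose leaves from left to right are labelled 1, 2, …, 4^k, and let T2 be obtained in the same way from the rooted balanced binary tree of height 2k whose leaves from left to right are labelled by swap(1, 2, …, 4^k). Then T1 and T2 have no agreement subtree with more than 3·2^{k−1} leaves, i.e., mast{T1, T2} ≤ 3·2^{k−1}. -/

import Mathlib

/-!
# Rooted binary phylogenetic trees

`RTree L` is the type of rooted binary trees with leaves labelled by elements of `L`:
every internal vertex has exactly two children (a left child and a right child), and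
a tree with one leaf is a single vertex.
-/

inductive RTree (L : Type) : Type
  | leaf : L → RTree L
  | node : RTree L → RTree L → RTree L

namespace RTree

variable {L : Type}

/-- The list of leaf labels of a rooted binary tree, read from left to right. -/
def leafList : RTree L → List L
  | leaf b => [b]
  | node l r => leafList l ++ leafList r

/-- The number of leaves of a rooted binary tree. -/
def numLeaves (T : RTree L) : ℕ := T.leafList.length

/-- The set of leaf labels of a rooted binary tree. -/
def leafSet (T : RTree L) : Set L := {b | b ∈ T.leafList}

/-- The height of a rooted binary tree: the maximum distance from the root to a leaf. -/
def height : RTree L → ℕ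
  | leaf _ => 0
  | node l r => max (height l) (height r) + 1

/-- A rooted binary tree is balanced if all of its leaves are at the same distance
from the root. -/
def IsBalanced : RTree L → Prop
  | leaf _ => True
  | node l r => IsBalanced l ∧ IsBalanced r ∧ height l = height r

/-- A rooted binary tree is phylogenetic if its leaves are labelled bijectively by a
finite set, i.e. all leaf labels are distinct. -/
def IsPhylo (T : RTree L) : Prop := T.leafList.Nodup

/-- `Embeds S T` is the subtree relation `S ⪯ T`: there is an injective map `f` from the
vertices of `S` to the vertices of `T` such that `f x = x` for every leaf `x` of `S`
(leaves being identified across trees by their labels) and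
`f (x ∧ y) = f x ∧ f y` for all vertices `x`, `y` of `S`, where `∧` denotes the most
recent common ancestor.  Equivalently (for trees with distinct leaf labels), `S` is the
restriction of `T` to the leaf set of `S`, up to rooted isomorphism; this structural
characterization is taken as the definition. -/
inductive Embeds : RTree L → RTree L → Prop
  | leaf (b : L) : Embeds (RTree.leaf b) (RTree.leaf b)
  | left {S l r : RTree L} : Embeds S l → Embeds S (RTree.node l r)
  | right {S l r : RTree L} : Embeds S r → Embeds S (RTree.node l r)
  | pair {s₁ s₂ l r : RTree L} :
      Embeds s₁ l → Embeds s₂ r → Embeds (RTree.node s₁ s₂) (RTree.node l r)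
  | pair_swap {s₁ s₂ l r : RTree L} :
      Embeds s₁ r → Embeds s₂ l → Embeds (RTree.node s₁ s₂) (RTree.node l r)

/-- `mast T₁ T₂` is the maximum cardinality of a subset `X ⊆ L(T₁) ∩ L(T₂)` such that
the restrictions `T₁|X` and `T₂|X` are isomorphic; equivalently, the maximum number of
leaves of a rooted binary phylogenetic tree `S` with `S ⪯ T₁` and `S ⪯ T₂`. -/
noncomputable def mast (T₁ T₂ : RTree L) : ℕ :=
  sSup {n | ∃ S : RTree L, S.IsPhylo ∧ Embeds S T₁ ∧ Embeds S T₂ ∧ S.numLeaves = n}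

end RTree

/-!
# Unrooted binary phylogenetic trees, via rooted representatives

An unrooted binary phylogenetic tree (all internal vertices of degree 3) with at least
two leaves is represented by any rooted binary tree obtained from it by subdividing an
edge and rooting there; conversely, suppressing the (degree-2) root of a rooted binary
tree yields an unrooted one.  Two rooted trees represent the same unrooted tree (i.e.
the unrooted trees are isomorphic by a graph isomorphism fixing every leaf label) iff
they are related by the equivalence relation `URel` generated by moving the root across
an edge together with (unordered) rooted isomorphism.
-/

namespace RTree

variable {L : Type}

/-- Rooted isomorphism of rooted binary trees, fixing all leaf labels (the two children
of a vertex are unordered). -/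
inductive RIso : RTree L → RTree L → Prop
  | leaf (b : L) : RIso (RTree.leaf b) (RTree.leaf b)
  | pair {a b c d : RTree L} :
      RIso a c → RIso b d → RIso (RTree.node a b) (RTree.node c d)
  | pair_swap {a b c d : RTree L} :
      RIso a d → RIso b c → RIso (RTree.node a b) (RTree.node c d)

/-- Moving the root of a rooted binary tree across one edge of the underlying unrooted
tree: this does not change the unrooted tree obtained by suppressing the root. -/
inductive RootMove : RTree L → RTree L → Prop
  | assoc (a b c : RTree L) :
      RootMove (RTree.node a (RTree.node b c)) (RTree.node (RTree.node a b) c)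

/-- `URel S T` holds iff the unrooted binary trees obtained from `S` and `T` by
suppressing their roots are isomorphic by a graph isomorphism fixing every leaf label. -/
def URel (S T : RTree L) : Prop :=
  Relation.EqvGen (fun X Y => RootMove X Y ∨ RIso X Y) S T

/-- `umast T₁ T₂` is the maximum agreement subtree size of the *unrooted* binary
phylogenetic trees represented by `T₁` and `T₂`: the maximum cardinality of a set
`X ⊆ L(T₁) ∩ L(T₂)` such that the unrooted restrictions `T₁|X` and `T₂|X` are
isomorphic (fixing leaf labels).  Equivalently, the maximum number of leaves of a
common unrooted subtree, given here by a pair of rooted representatives. -/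
noncomputable def umast (T₁ T₂ : RTree L) : ℕ :=
  sSup {n | ∃ S₁ S₂ : RTree L, S₁.IsPhylo ∧ S₂.IsPhylo ∧
    Embeds S₁ T₁ ∧ Embeds S₂ T₂ ∧ URel S₁ S₂ ∧ S₁.numLeaves = n}

end RTree

/-- `buildL m S` is the rooted balanced binary tree of height `m` whose `2^m` leaves,
read from left to right, are labelled by the entries of the list `S`. -/
def buildL : ℕ → List ℕ → RTree ℕ
  | 0, S => RTree.leaf S.headI
  | m + 1, S => RTree.node (buildL m (S.take (2 ^ m))) (buildL m (S.drop (2 ^ m)))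

/-- The `swap` operation on sequences of length `4^i`: `swap(S) = S` for a sequence of
length one, and if `S = S₁:S₂:S₃:S₄` is a concatenation of four blocks of length
`4^(i-1)`, then `swap(S) = swap(S₁):swap(S₃):swap(S₂):swap(S₄)`. -/
def swapList : ℕ → List ℕ → List ℕ
  | 0, S => S
  | i + 1, S =>
      swapList i (S.take (4 ^ i)) ++
      swapList i (((S.drop (4 ^ i)).drop (4 ^ i)).take (4 ^ i)) ++
      swapList i ((S.drop (4 ^ i)).take (4 ^ i)) ++
      swapList i (((S.drop (4 ^ i)).drop (4 ^ i)).drop (4 ^ i))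

namespace RTree

variable {L : Type}

theorem exists_leaf : ∀ T : RTree L, ∃ x, x ∈ T.leafList
  | leaf b => ⟨b, by simp [leafList]⟩
  | node l r => by
      obtain ⟨x, hx⟩ := exists_leaf l
      exact ⟨x, by simp [leafList, hx]⟩

@[simp] theorem leafList_leaf (b : L) : (leaf b).leafList = [b] := rfl
@[simp] theorem leafList_node (l r : RTree L) :
    (node l r).leafList = l.leafList ++ r.leafList := rfl

theorem numLeaves_node (l r : RTree L) :
    (node l r).numLeaves = l.numLeaves + r.numLeaves := by
  simp [numLeaves]

theorem Embeds.mem_leafList {S T : RTree L} (h : Embeds S T) :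
    ∀ x ∈ S.leafList, x ∈ T.leafList := by
  induction h with
  | leaf b => intro x hx; exact hx
  | left _ ih => intro x hx; simp [ih x hx]
  | right _ ih => intro x hx; simp [ih x hx]
  | pair h1 h2 ih1 ih2 =>
      intro x hx
      simp only [leafList_node, List.mem_append] at hx ⊢
      rcases hx with hx | hx
      · exact Or.inl (ih1 x hx)
      · exact Or.inr (ih2 x hx)
  | pair_swap h1 h2 ih1 ih2 =>
      intro x hx
      simp only [leafList_node, List.mem_append] at hx ⊢
      rcases hx with hx | hx
      · exact Or.inr (ih1 x hx)
      · exact Or.inl (ih2 x hx)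

theorem embeds_leaf_inv {S : RTree L} {b : L} (h : Embeds S (leaf b)) : S = leaf b := by
  cases h; rfl

/-- Pruning: if no leaf of `S` lies in `r`, an embedding into `node l r` lands in `l`. -/
theorem prune_right {S l r : RTree L} (h : Embeds S (node l r))
    (hd : ∀ x ∈ S.leafList, x ∉ r.leafList) : Embeds S l := by
  cases h with
  | left h => exact h
  | right h =>
      obtain ⟨x, hx⟩ := exists_leaf S
      exact absurd (h.mem_leafList x hx) (hd x hx)
  | pair h1 h2 =>
      obtain ⟨x, hx⟩ := exists_leaf _
      exact absurd (h2.mem_leafList x hx)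
        (hd x (by simp [hx]))
  | pair_swap h1 h2 =>
      obtain ⟨x, hx⟩ := exists_leaf _
      exact absurd (h1.mem_leafList x hx)
        (hd x (by simp [hx]))

theorem prune_left {S l r : RTree L} (h : Embeds S (node l r))
    (hd : ∀ x ∈ S.leafList, x ∉ l.leafList) : Embeds S r := by
  cases h with
  | right h => exact h
  | left h =>
      obtain ⟨x, hx⟩ := exists_leaf S
      exact absurd (h.mem_leafList x hx) (hd x hx)
  | pair h1 h2 =>
      obtain ⟨x, hx⟩ := exists_leaf _
      exact absurd (h1.mem_leafList x hx)
        (hd x (by simp [hx]))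
  | pair_swap h1 h2 =>
      obtain ⟨x, hx⟩ := exists_leaf _
      exact absurd (h2.mem_leafList x hx)
        (hd x (by simp [hx]))

theorem RIso.refl : ∀ T : RTree L, RIso T T
  | RTree.leaf b => RIso.leaf b
  | RTree.node l r => RIso.pair (RIso.refl l) (RIso.refl r)

theorem RIso.symm {S T : RTree L} (h : RIso S T) : RIso T S := by
  induction h with
  | leaf b => exact RIso.leaf b
  | pair _ _ ih1 ih2 => exact RIso.pair ih1 ih2
  | pair_swap _ _ ih1 ih2 => exact RIso.pair_swap ih2 ih1

theorem RIso.perm {S T : RTree L} (h : RIso S T) : List.Perm S.leafList T.leafList := by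
  induction h with
  | leaf b => exact List.Perm.refl _
  | pair _ _ ih1 ih2 => simpa using ih1.append ih2
  | pair_swap _ _ ih1 ih2 =>
      simp only [leafList_node]
      exact (ih1.append ih2).trans (List.perm_append_comm)

/-- transport an embedding along a rooted isomorphism of the source -/
theorem Embeds.of_riso {S S' T : RTree L} (hi : RIso S' S) (h : Embeds S T) :
    Embeds S' T := by
  induction h generalizing S' with
  | leaf b => cases hi; exact Embeds.leaf b
  | left _ ih => exact Embeds.left (ih hi)
  | right _ ih => exact Embeds.right (ih hi)
  | pair h1 h2 ih1 ih2 =>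
      cases hi with
      | pair g1 g2 => exact Embeds.pair (ih1 g1) (ih2 g2)
      | pair_swap g1 g2 => exact Embeds.pair_swap (ih2 g1) (ih1 g2)
  | pair_swap h1 h2 ih1 ih2 =>
      cases hi with
      | pair g1 g2 => exact Embeds.pair_swap (ih1 g1) (ih2 g2)
      | pair_swap g1 g2 => exact Embeds.pair (ih2 g1) (ih1 g2)

theorem urel_refl (T : RTree L) : URel T T := Relation.EqvGen.refl T
theorem urel_symm {S T : RTree L} (h : URel S T) : URel T S := Relation.EqvGen.symm _ _ h
theorem urel_trans {S T U : RTree L} (h1 : URel S T) (h2 : URel T U) : URel S U :=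
  Relation.EqvGen.trans _ _ _ h1 h2
theorem urel_of_riso {S T : RTree L} (h : RIso S T) : URel S T :=
  Relation.EqvGen.rel _ _ (Or.inr h)
theorem urel_of_rootMove {S T : RTree L} (h : RootMove S T) : URel S T :=
  Relation.EqvGen.rel _ _ (Or.inl h)

theorem URel.perm {S T : RTree L} (h : URel S T) : List.Perm S.leafList T.leafList := by
  induction h with
  | rel _ _ h =>
      rcases h with h | h
      · cases h with
        | assoc a b c => simp [List.append_assoc]
      · exact h.perm
  | refl _ => exact List.Perm.refl _
  | symm _ _ _ ih => exact ih.symm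
  | trans _ _ _ _ _ ih1 ih2 => exact ih1.trans ih2

theorem URel.numLeaves_eq {S T : RTree L} (h : URel S T) : S.numLeaves = T.numLeaves :=
  h.perm.length_eq

theorem URel.isPhylo {S T : RTree L} (h : URel S T) (hp : S.IsPhylo) : T.IsPhylo :=
  h.perm.nodup_iff.mp hp

theorem IsPhylo.left {l r : RTree L} (h : (node l r).IsPhylo) : l.IsPhylo := by
  simp only [IsPhylo, leafList_node, List.nodup_append] at h
  exact h.1

theorem IsPhylo.right {l r : RTree L} (h : (node l r).IsPhylo) : r.IsPhylo := by
  simp only [IsPhylo, leafList_node, List.nodup_append] at h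
  exact h.2.1

theorem IsPhylo.disj {l r : RTree L} (h : (node l r).IsPhylo) :
    ∀ x ∈ l.leafList, x ∉ r.leafList := by
  simp only [IsPhylo, leafList_node, List.nodup_append] at h
  intro x hx hx'
  exact h.2.2 x hx x hx' rfl

end RTree
namespace RTree

variable {L : Type}

/-- Restriction of a tree to the leaves satisfying `P` (with suppression of
degree-two vertices); `none` if no leaf satisfies `P`. -/
def restrict : RTree L → (L → Bool) → Option (RTree L)
  | leaf b, P => if P b then some (leaf b) else none
  | node l r, P =>
      match restrict l P, restrict r P with
      | some l', some r' => some (node l' r')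
      | some l', none => some l'
      | none, some r' => some r'
      | none, none => none

theorem restrict_leaf (b : L) (P : L → Bool) :
    restrict (leaf b) P = if P b then some (leaf b) else none := rfl

theorem restrict_node (l r : RTree L) (P : L → Bool) :
    restrict (node l r) P =
      match restrict l P, restrict r P with
      | some l', some r' => some (node l' r')
      | some l', none => some l'
      | none, some r' => some r'
      | none, none => none := rfl

theorem restrict_all {T : RTree L} {P : L → Bool}
    (h : ∀ x ∈ T.leafList, P x = true) : restrict T P = some T := by
  induction T with
  | leaf b => simp [restrict, h b (by simp)]
  | node l r ihl ihr =>
      rw [restrict_node, ihl fun x hx => h x (by simp [hx]),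
        ihr fun x hx => h x (by simp [hx])]

theorem restrict_none {T : RTree L} {P : L → Bool}
    (h : ∀ x ∈ T.leafList, P x = false) : restrict T P = none := by
  induction T with
  | leaf b => simp [restrict, h b (by simp)]
  | node l r ihl ihr =>
      rw [restrict_node, ihl fun x hx => h x (by simp [hx]),
        ihr fun x hx => h x (by simp [hx])]

/-- The joint behaviour of `restrict` along `RIso`. -/
theorem riso_restrict {S S' : RTree L} (h : RIso S S') (P : L → Bool) :
    (restrict S P = none ∧ restrict S' P = none) ∨
    (∃ t t', restrict S P = some t ∧ restrict S' P = some t' ∧ RIso t t') := by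
  induction h with
  | leaf b =>
      by_cases hb : P b = true
      · exact Or.inr ⟨leaf b, leaf b, by simp [restrict, hb], by simp [restrict, hb],
          RIso.refl _⟩
      · simp only [Bool.not_eq_true] at hb
        exact Or.inl ⟨by simp [restrict, hb], by simp [restrict, hb]⟩
  | @pair a b c d _ _ ih1 ih2 =>
      rcases ih1 with ⟨e1, e1'⟩ | ⟨t1, t1', e1, e1', i1⟩ <;>
        rcases ih2 with ⟨e2, e2'⟩ | ⟨t2, t2', e2, e2', i2⟩
      · exact Or.inl ⟨by rw [restrict_node, e1, e2], by rw [restrict_node, e1', e2']⟩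
      · exact Or.inr ⟨t2, t2', by rw [restrict_node, e1, e2], by rw [restrict_node, e1', e2'], i2⟩
      · exact Or.inr ⟨t1, t1', by rw [restrict_node, e1, e2], by rw [restrict_node, e1', e2'], i1⟩
      · exact Or.inr ⟨node t1 t2, node t1' t2', by rw [restrict_node, e1, e2],
          by rw [restrict_node, e1', e2'], RIso.pair i1 i2⟩
  | @pair_swap a b c d _ _ ih1 ih2 =>
      -- RIso a d, RIso b c : S = node a b, S' = node c d
      rcases ih1 with ⟨e1, e1'⟩ | ⟨t1, t1', e1, e1', i1⟩ <;>
        rcases ih2 with ⟨e2, e2'⟩ | ⟨t2, t2', e2, e2', i2⟩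
      · exact Or.inl ⟨by rw [restrict_node, e1, e2], by rw [restrict_node, e2', e1']⟩
      · exact Or.inr ⟨t2, t2', by rw [restrict_node, e1, e2], by rw [restrict_node, e2', e1'], i2⟩
      · exact Or.inr ⟨t1, t1', by rw [restrict_node, e1, e2], by rw [restrict_node, e2', e1'], i1⟩
      · exact Or.inr ⟨node t1 t2, node t2' t1', by rw [restrict_node, e1, e2],
          by rw [restrict_node, e2', e1'], RIso.pair_swap i1 i2⟩

/-- The joint behaviour of `restrict` along `URel`: restrictions of `URel`-related
trees are `URel`-related (or both empty). -/
theorem urel_restrict {S S' : RTree L} (h : URel S S') (P : L → Bool) :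
    (restrict S P = none ∧ restrict S' P = none) ∨
    (∃ t t', restrict S P = some t ∧ restrict S' P = some t' ∧ URel t t') := by
  induction h with
  | rel X Y hXY =>
      rcases hXY with hm | hi
      · cases hm with
        | assoc a b c =>
            rcases ea : restrict a P with _ | a' <;>
              rcases eb : restrict b P with _ | b' <;>
                rcases ec : restrict c P with _ | c' <;>
                  simp only [restrict_node, ea, eb, ec]
            · exact Or.inl ⟨trivial, trivial⟩
            · exact Or.inr ⟨c', c', rfl, rfl, urel_refl _⟩
            · exact Or.inr ⟨b', b', rfl, rfl, urel_refl _⟩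
            · exact Or.inr ⟨node b' c', node b' c', rfl, rfl, urel_refl _⟩
            · exact Or.inr ⟨a', a', rfl, rfl, urel_refl _⟩
            · exact Or.inr ⟨node a' c', node a' c', rfl, rfl, urel_refl _⟩
            · exact Or.inr ⟨node a' b', node a' b', rfl, rfl, urel_refl _⟩
            · exact Or.inr ⟨node a' (node b' c'), node (node a' b') c', rfl, rfl,
                urel_of_rootMove (RootMove.assoc _ _ _)⟩
      · rcases riso_restrict hi P with ⟨e, e'⟩ | ⟨t, t', e, e', i⟩
        · exact Or.inl ⟨e, e'⟩
        · exact Or.inr ⟨t, t', e, e', urel_of_riso i⟩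
  | refl X =>
      rcases e : restrict X P with _ | t
      · exact Or.inl ⟨rfl, rfl⟩
      · exact Or.inr ⟨t, t, rfl, rfl, urel_refl t⟩
  | symm X Y _ ih =>
      rcases ih with ⟨e, e'⟩ | ⟨t, t', e, e', u⟩
      · exact Or.inl ⟨e', e⟩
      · exact Or.inr ⟨t', t, e', e, urel_symm u⟩
  | trans X Y Z _ _ ih1 ih2 =>
      rcases ih1 with ⟨e1, e1'⟩ | ⟨t1, t1', e1, e1', u1⟩ <;>
        rcases ih2 with ⟨e2, e2'⟩ | ⟨t2, t2', e2, e2', u2⟩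
      · exact Or.inl ⟨e1, e2'⟩
      · rw [e1'] at e2; cases e2
      · rw [e1'] at e2; cases e2
      · rw [e1'] at e2; cases e2; exact Or.inr ⟨t1, t2', e1, e2', urel_trans u1 u2⟩

end RTree
namespace RTree

variable {L : Type}

/-- `Sub t S`: `t` is a (not necessarily proper) subtree of `S`. -/
inductive Sub : RTree L → RTree L → Prop
  | refl (T : RTree L) : Sub T T
  | left {t l r : RTree L} : Sub t l → Sub t (node l r)
  | right {t l r : RTree L} : Sub t r → Sub t (node l r)

theorem Sub.subset {t S : RTree L} (h : Sub t S) : ∀ x ∈ t.leafList, x ∈ S.leafList := by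
  induction h with
  | refl => exact fun x hx => hx
  | left _ ih => intro x hx; simp [ih x hx]
  | right _ ih => intro x hx; simp [ih x hx]

@[simp] theorem leafSet_node (l r : RTree L) :
    (node l r).leafSet = l.leafSet ∪ r.leafSet := by
  ext x; simp [leafSet]

theorem mem_leafSet {x : L} {T : RTree L} : x ∈ T.leafSet ↔ x ∈ T.leafList := Iff.rfl

/-- X is one side of a split of the unrooted tree underlying `S`. -/
def ClOrCo (S : RTree L) (X : Set L) : Prop :=
  ∃ t, Sub t S ∧ (X = t.leafSet ∨ X = S.leafSet \ t.leafSet)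

theorem clorco_subset {S : RTree L} {X : Set L} (h : ClOrCo S X) : X ⊆ S.leafSet := by
  obtain ⟨t, hsub, hX | hX⟩ := h
  · rw [hX]; exact fun x hx => hsub.subset x hx
  · rw [hX]; exact fun x hx => hx.1

theorem IsPhylo.disjSet {l r : RTree L} (h : (node l r).IsPhylo) :
    ∀ x ∈ l.leafSet, x ∉ r.leafSet := fun x hx hx' => h.disj x hx hx'

/-- Two subtrees of a phylogenetic tree have nested or disjoint leaf sets. -/
theorem sub_nested_or_disj {S t t' : RTree L} (hp : S.IsPhylo)
    (h1 : Sub t S) (h2 : Sub t' S) :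
    t.leafSet ⊆ t'.leafSet ∨ t'.leafSet ⊆ t.leafSet ∨
      ∀ x, x ∈ t.leafSet → x ∉ t'.leafSet := by
  induction S with
  | leaf b =>
      cases h1; cases h2; exact Or.inl (fun x hx => hx)
  | node l r ihl ihr =>
      cases h1 with
      | refl => exact Or.inr (Or.inl (fun x hx => h2.subset x hx))
      | left hs1 =>
          cases h2 with
          | refl => exact Or.inl (fun x hx => (Sub.left hs1).subset x hx)
          | left hs2 => exact ihl hp.left hs1 hs2
          | right hs2 =>
              exact Or.inr (Or.inr (fun x hx hx' =>
                hp.disj x (hs1.subset x hx) (hs2.subset x hx')))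
      | right hs1 =>
          cases h2 with
          | refl => exact Or.inl (fun x hx => (Sub.right hs1).subset x hx)
          | right hs2 => exact ihr hp.right hs1 hs2
          | left hs2 =>
              exact Or.inr (Or.inr (fun x hx hx' =>
                hp.disj x (hs2.subset x hx') (hs1.subset x hx)))

/-- Compatibility of two splits of the same phylogenetic tree. -/
theorem compat4 {S : RTree L} {X Y : Set L} (hp : S.IsPhylo)
    (hX : ClOrCo S X) (hY : ClOrCo S Y) :
    (∀ x ∈ X, x ∉ Y) ∨ X ⊆ Y ∨ Y ⊆ X ∨ (∀ x ∈ S.leafSet, x ∈ X ∨ x ∈ Y) := by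
  obtain ⟨t, hsub, hXe⟩ := hX
  obtain ⟨t', hsub', hYe⟩ := hY
  have hts : t.leafSet ⊆ S.leafSet := fun x hx => hsub.subset x hx
  have hts' : t'.leafSet ⊆ S.leafSet := fun x hx => hsub'.subset x hx
  rcases sub_nested_or_disj hp hsub hsub' with hn | hn | hn <;>
    rcases hXe with hXe | hXe <;> rcases hYe with hYe | hYe <;> subst hXe <;> subst hYe
  -- t ⊆ t' : (cl,cl) (cl,co) (co,cl) (co,co)
  · exact Or.inr (Or.inl hn)
  · exact Or.inl (fun x hx hx' => hx'.2 (hn hx))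
  · exact Or.inr (Or.inr (Or.inr (fun x hx => by
      by_cases h : x ∈ t.leafSet
      · exact Or.inr (hn h)
      · exact Or.inl ⟨hx, h⟩)))
  · exact Or.inr (Or.inr (Or.inl (fun x hx => ⟨hx.1, fun h => hx.2 (hn h)⟩)))
  -- t' ⊆ t
  · exact Or.inr (Or.inr (Or.inl hn))
  · exact Or.inr (Or.inr (Or.inr (fun x hx => by
      by_cases h : x ∈ t'.leafSet
      · exact Or.inl (hn h)
      · exact Or.inr ⟨hx, h⟩)))
  · exact Or.inl (fun x hx hx' => hx.2 (hn hx'))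
  · exact Or.inr (Or.inl (fun x hx => ⟨hx.1, fun h => hx.2 (hn h)⟩))
  -- disjoint
  · exact Or.inl hn
  · exact Or.inr (Or.inl (fun x hx => ⟨hts hx, fun h => hn x hx h⟩))
  · exact Or.inr (Or.inr (Or.inl (fun x hx => ⟨hts' hx, fun h => hn x h hx⟩)))
  · exact Or.inr (Or.inr (Or.inr (fun x hx => by
      by_cases h : x ∈ t.leafSet
      · exact Or.inr ⟨hx, fun h' => hn x h h'⟩
      · exact Or.inl ⟨hx, h⟩)))

theorem riso_sub {S S' t : RTree L} (hi : RIso S S') (h : Sub t S) :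
    ∃ t', Sub t' S' ∧ RIso t t' := by
  induction hi generalizing t with
  | leaf b => cases h; exact ⟨leaf b, Sub.refl _, RIso.leaf b⟩
  | @pair a b c d h1 h2 ih1 ih2 =>
      cases h with
      | refl => exact ⟨node c d, Sub.refl _, RIso.pair h1 h2⟩
      | left hs => obtain ⟨t', ht', hi'⟩ := ih1 hs; exact ⟨t', Sub.left ht', hi'⟩
      | right hs => obtain ⟨t', ht', hi'⟩ := ih2 hs; exact ⟨t', Sub.right ht', hi'⟩
  | @pair_swap a b c d h1 h2 ih1 ih2 =>
      cases h with
      | refl => exact ⟨node c d, Sub.refl _, RIso.pair_swap h1 h2⟩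
      | left hs => obtain ⟨t', ht', hi'⟩ := ih1 hs; exact ⟨t', Sub.right ht', hi'⟩
      | right hs => obtain ⟨t', ht', hi'⟩ := ih2 hs; exact ⟨t', Sub.left ht', hi'⟩

theorem RIso.leafSet_eq {S T : RTree L} (h : RIso S T) : S.leafSet = T.leafSet := by
  ext x; simpa [leafSet] using h.perm.mem_iff

theorem riso_clorco {S S' : RTree L} (hi : RIso S S') {X : Set L} (h : ClOrCo S X) :
    ClOrCo S' X := by
  obtain ⟨t, hsub, hX⟩ := h
  obtain ⟨t', hsub', hi'⟩ := riso_sub hi hsub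
  refine ⟨t', hsub', ?_⟩
  rw [← hi'.leafSet_eq, ← hi.leafSet_eq]
  exact hX

/-- `ClOrCo` along a root move, forward. -/
theorem rootmove_clorco₁ {a b c : RTree L} (hp : (node a (node b c)).IsPhylo)
    {X : Set L} (h : ClOrCo (node a (node b c)) X) : ClOrCo (node (node a b) c) X := by
  have hset : (node a (node b c)).leafSet = (node (node a b) c).leafSet := by
    simp [Set.union_assoc]
  have hdis : ∀ x, x ∈ a.leafSet → x ∉ b.leafSet ∪ c.leafSet := by
    intro x hx hx'
    refine hp.disj x hx ?_
    rcases hx' with h | h <;> simp [mem_leafSet.mp h]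
  obtain ⟨t, hsub, hX⟩ := h
  cases hsub with
  | refl =>
      refine ⟨node (node a b) c, Sub.refl _, ?_⟩
      rw [← hset]; exact hX
  | left hs =>
      refine ⟨t, Sub.left (Sub.left hs), ?_⟩
      rw [← hset]; exact hX
  | right hs =>
      cases hs with
      | refl =>
          have h1 : (node a (node b c)).leafSet \ (node b c).leafSet = a.leafSet := by
            ext x
            simp only [leafSet_node, Set.mem_diff, Set.mem_union]
            constructor
            · rintro ⟨h1 | h1, h2⟩
              · exact h1
              · exact absurd h1 h2
            · intro hx
              exact ⟨Or.inl hx, fun h => hdis x hx (by simpa using h)⟩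
          have h2 : (node a (node b c)).leafSet \ a.leafSet = (node b c).leafSet := by
            ext x
            simp only [leafSet_node, Set.mem_diff, Set.mem_union]
            constructor
            · rintro ⟨h1 | h1, h2⟩
              · exact absurd h1 h2
              · exact h1
            · intro hx
              exact ⟨Or.inr hx, fun h => hdis x h (by simpa using hx)⟩
          rcases hX with hX | hX
          · refine ⟨a, Sub.left (Sub.left (Sub.refl a)), Or.inr ?_⟩
            rw [← hset, h2]; exact hX
          · refine ⟨a, Sub.left (Sub.left (Sub.refl a)), Or.inl ?_⟩
            rw [hX, h1]
      | left hs' =>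
          refine ⟨t, Sub.left (Sub.right hs'), ?_⟩
          rw [← hset]; exact hX
      | right hs' =>
          refine ⟨t, Sub.right hs', ?_⟩
          rw [← hset]; exact hX

/-- `ClOrCo` along a root move, backward. -/
theorem rootmove_clorco₂ {a b c : RTree L} (hp : (node (node a b) c).IsPhylo)
    {X : Set L} (h : ClOrCo (node (node a b) c) X) : ClOrCo (node a (node b c)) X := by
  have hset : (node (node a b) c).leafSet = (node a (node b c)).leafSet := by
    simp [Set.union_assoc]
  have hdis : ∀ x, x ∈ a.leafSet ∪ b.leafSet → x ∉ c.leafSet := by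
    intro x hx hx'
    refine hp.disj x ?_ hx'
    rcases hx with h | h <;> simp [mem_leafSet.mp h]
  obtain ⟨t, hsub, hX⟩ := h
  cases hsub with
  | refl =>
      refine ⟨node a (node b c), Sub.refl _, ?_⟩
      rw [← hset]; exact hX
  | right hs =>
      refine ⟨t, Sub.right (Sub.right hs), ?_⟩
      rw [← hset]; exact hX
  | left hs =>
      cases hs with
      | refl =>
          have h1 : (node (node a b) c).leafSet \ (node a b).leafSet = c.leafSet := by
            ext x
            simp only [leafSet_node, Set.mem_diff, Set.mem_union]
            constructor
            · rintro ⟨h1 | h1, h2⟩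
              · exact absurd h1 h2
              · exact h1
            · intro hx
              exact ⟨Or.inr hx, fun h => hdis x (by simpa using h) hx⟩
          have h2 : (node (node a b) c).leafSet \ c.leafSet = (node a b).leafSet := by
            ext x
            simp only [leafSet_node, Set.mem_diff, Set.mem_union]
            constructor
            · rintro ⟨h1 | h1, h2⟩
              · exact h1
              · exact absurd h1 h2
            · intro hx
              exact ⟨Or.inl hx, hdis x (by simpa using hx)⟩
          rcases hX with hX | hX
          · refine ⟨c, Sub.right (Sub.right (Sub.refl c)), Or.inr ?_⟩
            rw [← hset, h2]; exact hX
          · refine ⟨c, Sub.right (Sub.right (Sub.refl c)), Or.inl ?_⟩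
            rw [hX, h1]
      | left hs' =>
          refine ⟨t, Sub.left hs', ?_⟩
          rw [← hset]; exact hX
      | right hs' =>
          refine ⟨t, Sub.right (Sub.left hs'), ?_⟩
          rw [← hset]; exact hX

/-- splits are invariant under `URel`. -/
theorem urel_clorco {S S' : RTree L} (h : URel S S') (hp : S.IsPhylo) {X : Set L}
    (hX : ClOrCo S X) : ClOrCo S' X := by
  have main : ∀ {A B : RTree L}, URel A B →
      (∀ X : Set L, A.IsPhylo → ClOrCo A X → ClOrCo B X) ∧
      (∀ X : Set L, B.IsPhylo → ClOrCo B X → ClOrCo A X) := by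
    intro A B h
    induction h with
    | rel A B hAB =>
        rcases hAB with hm | hi
        · cases hm with
          | assoc a b c =>
              exact ⟨fun X hp hX => rootmove_clorco₁ hp hX,
                fun X hp hX => rootmove_clorco₂ hp hX⟩
        · exact ⟨fun X _ hX => riso_clorco hi hX, fun X _ hX => riso_clorco hi.symm hX⟩
    | refl A => exact ⟨fun _ _ hX => hX, fun _ _ hX => hX⟩
    | symm A B hAB ih => exact ⟨ih.2, ih.1⟩
    | trans A B C hAB hBC ih1 ih2 =>
        refine ⟨fun X hp hX => ih2.1 X ?_ (ih1.1 X hp hX),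
          fun X hp hX => ih1.2 X ?_ (ih2.2 X hp hX)⟩
        · exact (URel.perm hAB).nodup_iff.mp hp
        · exact (URel.perm hBC).nodup_iff.mpr hp
  exact (main h).1 X hp hX

end RTree
namespace RTree

variable {L : Type}

theorem URel.leafSet_eq {S T : RTree L} (h : URel S T) : S.leafSet = T.leafSet := by
  ext x; simpa [leafSet] using h.perm.mem_iff

theorem numLeaves_pos (T : RTree L) : 0 < T.numLeaves := by
  obtain ⟨x, hx⟩ := exists_leaf T
  exact List.length_pos_iff.mpr (fun h => by simp [h] at hx)

theorem compat4_contra {S : RTree L} {X Y : Set L} (hp : S.IsPhylo)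
    (hX : ClOrCo S X) (hY : ClOrCo S Y)
    (h1 : ∃ x, x ∈ X ∧ x ∈ Y) (h2 : ∃ x, x ∈ X ∧ x ∉ Y)
    (h3 : ∃ x, x ∈ Y ∧ x ∉ X)
    (h4 : ∃ x, x ∈ S.leafSet ∧ x ∉ X ∧ x ∉ Y) : False := by
  rcases compat4 hp hX hY with h | h | h | h
  · obtain ⟨x, hx1, hx2⟩ := h1; exact h x hx1 hx2
  · obtain ⟨x, hx1, hx2⟩ := h2; exact hx2 (h hx1)
  · obtain ⟨x, hx1, hx2⟩ := h3; exact hx2 (h hx1)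
  · obtain ⟨x, hx1, hx2, hx3⟩ := h4
    rcases h x hx1 with h' | h'
    exacts [hx2 h', hx3 h']

/-- In `URel`-related trees whose root splits have the same first side,
the second sides have equal leaf sets. -/
theorem urel_second_leafSet {a d b e : RTree L}
    (hU : URel (node a d) (node b e)) (hp : (node a d).IsPhylo)
    (hA : a.leafSet = b.leafSet) : d.leafSet = e.leafSet := by
  have hp2 : (node b e).IsPhylo := hU.isPhylo hp
  have hG : (node a d).leafSet = (node b e).leafSet := hU.leafSet_eq
  have dAD := hp.disjSet
  have dBE := hp2.disjSet
  ext x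
  constructor
  · intro hx
    have hg : x ∈ b.leafSet ∪ e.leafSet := by
      have : x ∈ (node a d).leafSet := by simp [hx]
      rw [hG] at this; simpa using this
    rcases hg with hb | he
    · exact absurd hx (dAD x (hA ▸ hb))
    · exact he
  · intro hx
    have hg : x ∈ a.leafSet ∪ d.leafSet := by
      have : x ∈ (node b e).leafSet := by simp [hx]
      rw [← hG] at this; simpa using this
    rcases hg with ha | hd
    · exact absurd hx (dBE x (hA ▸ ha))
    · exact hd

/-- Children matching: in `URel`-related trees with matching root splits, the two
children of the matching second side have matching leaf sets (in some order). -/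
theorem children_match {a b d₁ d₂ e₁ e₂ : RTree L}
    (hU : URel (node a (node d₁ d₂)) (node b (node e₁ e₂)))
    (hp : (node a (node d₁ d₂)).IsPhylo)
    (hA : a.leafSet = b.leafSet) :
    (e₁.leafSet = d₁.leafSet ∧ e₂.leafSet = d₂.leafSet) ∨
    (e₁.leafSet = d₂.leafSet ∧ e₂.leafSet = d₁.leafSet) := by
  have hp2 : (node b (node e₁ e₂)).IsPhylo := hU.isPhylo hp
  have hDE : (node d₁ d₂).leafSet = (node e₁ e₂).leafSet :=
    urel_second_leafSet hU hp hA
  have dAD : ∀ x, x ∈ a.leafSet → ¬(x ∈ d₁.leafSet ∨ x ∈ d₂.leafSet) := by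
    intro x hx hx'
    exact hp.disjSet x hx (by simpa using hx')
  have dD : ∀ x, x ∈ d₁.leafSet → x ∉ d₂.leafSet := hp.right.disjSet
  have dE : ∀ x, x ∈ e₁.leafSet → x ∉ e₂.leafSet := hp2.right.disjSet
  have hDeq : ∀ x, (x ∈ d₁.leafSet ∨ x ∈ d₂.leafSet) ↔ (x ∈ e₁.leafSet ∨ x ∈ e₂.leafSet) := by
    intro x
    have := Set.ext_iff.mp hDE x
    simpa using this
  -- clusters of S₁ := node a (node d₁ d₂)
  have cD₁ : ClOrCo (node a (node d₁ d₂)) d₁.leafSet :=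
    ⟨d₁, Sub.right (Sub.left (Sub.refl _)), Or.inl rfl⟩
  have cD₂ : ClOrCo (node a (node d₁ d₂)) d₂.leafSet :=
    ⟨d₂, Sub.right (Sub.right (Sub.refl _)), Or.inl rfl⟩
  have cE₁ : ClOrCo (node a (node d₁ d₂)) e₁.leafSet :=
    urel_clorco (urel_symm hU) hp2 ⟨e₁, Sub.right (Sub.left (Sub.refl _)), Or.inl rfl⟩
  have cE₂ : ClOrCo (node a (node d₁ d₂)) e₂.leafSet :=
    urel_clorco (urel_symm hU) hp2 ⟨e₂, Sub.right (Sub.right (Sub.refl _)), Or.inl rfl⟩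
  obtain ⟨xa, hxa⟩ := exists_leaf a
  have hxa : xa ∈ a.leafSet := hxa
  obtain ⟨x1, hx1⟩ := exists_leaf d₁
  have hx1 : x1 ∈ d₁.leafSet := hx1
  obtain ⟨x2, hx2⟩ := exists_leaf d₂
  have hx2 : x2 ∈ d₂.leafSet := hx2
  obtain ⟨y1, hy1⟩ := exists_leaf e₁
  have hy1 : y1 ∈ e₁.leafSet := hy1
  obtain ⟨y2, hy2⟩ := exists_leaf e₂
  have hy2 : y2 ∈ e₂.leafSet := hy2
  have hxaG : xa ∈ (node a (node d₁ d₂)).leafSet := by simp [hxa]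
  have haE₁ : xa ∉ e₁.leafSet := fun h => dAD xa hxa ((hDeq xa).mpr (Or.inl h))
  have haE₂ : xa ∉ e₂.leafSet := fun h => dAD xa hxa ((hDeq xa).mpr (Or.inr h))
  have haD₁ : xa ∉ d₁.leafSet := fun h => dAD xa hxa (Or.inl h)
  have haD₂ : xa ∉ d₂.leafSet := fun h => dAD xa hxa (Or.inr h)
  rcases compat4 hp cE₁ cD₁ with hc | hc | hc | hc
  · -- E₁ ∩ D₁ = ∅, so E₁ ⊆ D₂; show E₁ = D₂, E₂ = D₁
    have hE₁D₂ : ∀ x, x ∈ e₁.leafSet → x ∈ d₂.leafSet := by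
      intro x hx
      rcases (hDeq x).mpr (Or.inl hx) with h | h
      · exact absurd h (hc x hx)
      · exact h
    have hD₂E₁ : ∀ x, x ∈ d₂.leafSet → x ∈ e₁.leafSet := by
      intro y hy
      by_contra hy'
      refine compat4_contra hp cE₂ cD₂ ⟨y, ?_, hy⟩ ⟨x1, ?_, dD x1 hx1⟩
        ⟨y1, hE₁D₂ y1 hy1, dE y1 hy1⟩ ⟨xa, hxaG, haE₂, haD₂⟩
      · rcases (hDeq y).mp (Or.inr hy) with h | h
        · exact absurd h hy'
        · exact h
      · rcases (hDeq x1).mp (Or.inl hx1) with h | h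
        · exact absurd (hc x1 h hx1) not_false
        · exact h
    have hE₁ : e₁.leafSet = d₂.leafSet := Set.ext fun x => ⟨hE₁D₂ x, hD₂E₁ x⟩
    refine Or.inr ⟨hE₁, Set.ext fun x => ⟨?_, ?_⟩⟩
    · intro hx
      rcases (hDeq x).mpr (Or.inr hx) with h | h
      · exact h
      · exact absurd hx (dE x (hD₂E₁ x h))
    · intro hx
      rcases (hDeq x).mp (Or.inl hx) with h | h
      · exact absurd (hE₁D₂ x h) (dD x hx)
      · exact h
  · -- E₁ ⊆ D₁ ; show E₁ = D₁, E₂ = D₂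
    have hD₁E₁ : ∀ x, x ∈ d₁.leafSet → x ∈ e₁.leafSet := by
      intro y hy
      by_contra hy'
      have hyE₂ : y ∈ e₂.leafSet := by
        rcases (hDeq y).mp (Or.inl hy) with h | h
        · exact absurd h hy'
        · exact h
      have hx2E₂ : x2 ∈ e₂.leafSet := by
        rcases (hDeq x2).mp (Or.inr hx2) with h | h
        · exact absurd (hc h) (fun hh => dD x2 hh hx2)
        · exact h
      exact compat4_contra hp cE₂ cD₁ ⟨y, hyE₂, hy⟩ ⟨x2, hx2E₂, fun h => dD x2 h hx2⟩
        ⟨y1, hc hy1, dE y1 hy1⟩ ⟨xa, hxaG, haE₂, haD₁⟩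
    have hE₁ : e₁.leafSet = d₁.leafSet := Set.ext fun x => ⟨fun h => hc h, hD₁E₁ x⟩
    refine Or.inl ⟨hE₁, Set.ext fun x => ⟨?_, ?_⟩⟩
    · intro hx
      rcases (hDeq x).mpr (Or.inr hx) with h | h
      · exact absurd hx (dE x (hD₁E₁ x h))
      · exact h
    · intro hx
      rcases (hDeq x).mp (Or.inr hx) with h | h
      · exact absurd hx (fun hh => dD x (hE₁ ▸ h) hh)
      · exact h
  · -- D₁ ⊆ E₁
    by_cases hq : ∀ x, x ∈ e₁.leafSet → x ∈ d₁.leafSet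
    · -- E₁ = D₁
      have hE₁ : e₁.leafSet = d₁.leafSet := Set.ext fun x => ⟨hq x, fun h => hc h⟩
      refine Or.inl ⟨hE₁, Set.ext fun x => ⟨?_, ?_⟩⟩
      · intro hx
        rcases (hDeq x).mpr (Or.inr hx) with h | h
        · exact absurd hx (dE x (hc (hE₁ ▸ h : x ∈ d₁.leafSet)))
        · exact h
      · intro hx
        rcases (hDeq x).mp (Or.inr hx) with h | h
        · exact absurd hx (fun hh => dD x (hq x h) hh)
        · exact h
    · push_neg at hq
      obtain ⟨y, hyE₁, hyD₁⟩ := hq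
      exfalso
      have hyD₂ : y ∈ d₂.leafSet := by
        rcases (hDeq y).mpr (Or.inl hyE₁) with h | h
        · exact absurd h hyD₁
        · exact h
      have h3 : ∃ z, z ∈ d₂.leafSet ∧ z ∉ e₁.leafSet := by
        by_contra h
        push_neg at h
        have hy2' : y2 ∈ e₁.leafSet := by
          rcases (hDeq y2).mpr (Or.inr hy2) with hh | hh
          · exact hc hh
          · exact h y2 hh
        exact dE y2 hy2' hy2
      obtain ⟨z, hz1, hz2⟩ := h3
      exact compat4_contra hp cE₁ cD₂ ⟨y, hyE₁, hyD₂⟩ ⟨x1, hc hx1, dD x1 hx1⟩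
        ⟨z, hz1, hz2⟩ ⟨xa, hxaG, haE₁, haD₂⟩
  · -- everything in E₁ ∪ D₁ : impossible because of xa
    exfalso
    rcases hc xa hxaG with h | h
    exacts [haE₁ h, haD₁ h]

end RTree
namespace RTree

variable {L : Type}

theorem IsPhylo.collapse₁ {a d₁ d₂ : RTree L} (hp : (node a (node d₁ d₂)).IsPhylo) :
    (node a d₁).IsPhylo := by
  simp only [IsPhylo, leafList_node, List.nodup_append, List.disjoint_append_right] at hp ⊢
  exact ⟨hp.1, hp.2.1.1, fun x hx y hy => hp.2.2 x hx y (List.mem_append_left _ hy)⟩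

theorem IsPhylo.swap {a d : RTree L} (hp : (node a d).IsPhylo) : (node d a).IsPhylo := by
  simp only [IsPhylo, leafList_node, List.nodup_append] at hp ⊢
  exact ⟨hp.2.1, hp.1, fun x hx y hy hxy => hp.2.2 y hy x hx hxy.symm⟩

theorem urel_swap_both {a d b e : RTree L} (hU : URel (node a d) (node b e)) :
    URel (node d a) (node e b) :=
  urel_trans (urel_of_riso (RIso.pair_swap (RIso.refl d) (RIso.refl a)))
    (urel_trans hU (urel_of_riso (RIso.pair_swap (RIso.refl b) (RIso.refl e))))

theorem urel_inner_swap₁ {a d₁ d₂ S : RTree L}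
    (hU : URel (node a (node d₁ d₂)) S) : URel (node a (node d₂ d₁)) S :=
  urel_trans (urel_of_riso (RIso.pair (RIso.refl a)
    (RIso.pair_swap (RIso.refl d₂) (RIso.refl d₁)))) hU

theorem urel_inner_swap₂ {b e₁ e₂ S : RTree L}
    (hU : URel S (node b (node e₁ e₂))) : URel S (node b (node e₂ e₁)) :=
  urel_trans hU (urel_of_riso (RIso.pair (RIso.refl b)
    (RIso.pair_swap (RIso.refl e₁) (RIso.refl e₂))))

theorem isPhylo_inner_swap {a d₁ d₂ : RTree L} (hp : (node a (node d₁ d₂)).IsPhylo) :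
    (node a (node d₂ d₁)).IsPhylo := by
  have : RIso (node a (node d₂ d₁)) (node a (node d₁ d₂)) :=
    RIso.pair (RIso.refl a) (RIso.pair_swap (RIso.refl d₂) (RIso.refl d₁))
  exact this.perm.nodup_iff.mpr hp

/-- Restriction to the first child of the matching second side. -/
theorem urel_restrict_split {a d₁ d₂ b e₁ e₂ : RTree L}
    (hU : URel (node a (node d₁ d₂)) (node b (node e₁ e₂)))
    (hp : (node a (node d₁ d₂)).IsPhylo) (hA : a.leafSet = b.leafSet)
    (hex : e₁.leafSet = d₁.leafSet) :
    URel (node a d₁) (node b e₁) := by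
  classical
  have hp2 : (node b (node e₁ e₂)).IsPhylo := hU.isPhylo hp
  have hDE : (node d₁ d₂).leafSet = (node e₁ e₂).leafSet := urel_second_leafSet hU hp hA
  have dAD : ∀ x, x ∈ a.leafSet → ¬(x ∈ d₁.leafSet ∨ x ∈ d₂.leafSet) := by
    intro x hx hx'
    exact hp.disjSet x hx (by simpa using hx')
  have dD : ∀ x, x ∈ d₁.leafSet → x ∉ d₂.leafSet := hp.right.disjSet
  have dE : ∀ x, x ∈ e₁.leafSet → x ∉ e₂.leafSet := hp2.right.disjSet
  set P : L → Bool := fun x => decide (x ∈ a.leafList ∨ x ∈ d₁.leafList) with hPdef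
  have hPa : ∀ x ∈ a.leafList, P x = true := by intro x hx; simp [hPdef, hx]
  have hPd₁ : ∀ x ∈ d₁.leafList, P x = true := by intro x hx; simp [hPdef, hx]
  have hPd₂ : ∀ x ∈ d₂.leafList, P x = false := by
    intro x hx
    have hxs : x ∈ d₂.leafSet := hx
    simp only [hPdef, decide_eq_false_iff_not]
    rintro (h | h)
    · exact dAD x h (Or.inr hxs)
    · exact dD x h hxs
  have hPb : ∀ x ∈ b.leafList, P x = true := by
    intro x hx
    have hxa : x ∈ a.leafSet := by rw [hA]; exact hx
    exact hPa x hxa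
  have hPe₁ : ∀ x ∈ e₁.leafList, P x = true := by
    intro x hx
    have : x ∈ d₁.leafSet := by rw [← hex]; exact hx
    exact hPd₁ x this
  have hPe₂ : ∀ x ∈ e₂.leafList, P x = false := by
    intro x hx
    have hxs : x ∈ e₂.leafSet := hx
    have hxd : x ∈ d₁.leafSet ∨ x ∈ d₂.leafSet := by
      have : x ∈ (node d₁ d₂).leafSet := by rw [hDE]; simp [hxs]
      simpa using this
    simp only [hPdef, decide_eq_false_iff_not]
    rintro (h | h)
    · exact dAD x h hxd
    · exact dE x (hex ▸ (h : x ∈ d₁.leafSet)) hxs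
  have r₁ : restrict (node a (node d₁ d₂)) P = some (node a d₁) := by
    rw [restrict_node, restrict_all hPa, restrict_node, restrict_all hPd₁,
      restrict_none hPd₂]
  have r₂ : restrict (node b (node e₁ e₂)) P = some (node b e₁) := by
    rw [restrict_node, restrict_all hPb, restrict_node, restrict_all hPe₁,
      restrict_none hPe₂]
  rcases urel_restrict hU P with ⟨h1, _⟩ | ⟨t, t', h1, h2, hu⟩
  · rw [r₁] at h1; cases h1
  · rw [r₁] at h1
    rw [r₂] at h2
    cases h1; cases h2
    exact hu

/-- Key step for split uniqueness: second sides of matching root splits are isomorphic. -/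
theorem su_side : ∀ (n : ℕ) {a d b e : RTree L}, (node a d).numLeaves ≤ n →
    URel (node a d) (node b e) → (node a d).IsPhylo → a.leafSet = b.leafSet →
    RIso d e := by
  intro n
  induction n with
  | zero =>
      intro a d b e hn _ _ _
      exfalso
      have := numLeaves_pos (node a d)
      omega
  | succ n IH =>
      intro a d b e hn hU hp hA
      have hp2 : (node b e).IsPhylo := hU.isPhylo hp
      have hDE : d.leafSet = e.leafSet := urel_second_leafSet hU hp hA
      cases d with
      | leaf x =>
          cases e with
          | leaf y =>
              have : y ∈ (leaf x : RTree L).leafSet := by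
                rw [hDE]; simp [leafSet]
              have hxy : y = x := by simpa [leafSet] using this
              subst hxy
              exact RIso.refl _
          | node e₁ e₂ =>
              exfalso
              obtain ⟨y1, hy1⟩ := exists_leaf e₁
              obtain ⟨y2, hy2⟩ := exists_leaf e₂
              have hm1 : y1 ∈ (leaf x : RTree L).leafSet := by
                rw [hDE]; simp [leafSet, hy1]
              have hm2 : y2 ∈ (leaf x : RTree L).leafSet := by
                rw [hDE]; simp [leafSet, hy2]
              have e1x : y1 = x := by simpa [leafSet] using hm1
              have e2x : y2 = x := by simpa [leafSet] using hm2
              rw [e1x] at hy1; rw [e2x] at hy2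
              exact hp2.right.disj x hy1 hy2
      | node d₁ d₂ =>
          cases e with
          | leaf y =>
              exfalso
              obtain ⟨x1, hx1⟩ := exists_leaf d₁
              obtain ⟨x2, hx2⟩ := exists_leaf d₂
              have hm1 : x1 ∈ (leaf y : RTree L).leafSet := by
                rw [← hDE]; simp [leafSet, hx1]
              have hm2 : x2 ∈ (leaf y : RTree L).leafSet := by
                rw [← hDE]; simp [leafSet, hx2]
              have e1x : x1 = y := by simpa [leafSet] using hm1
              have e2x : x2 = y := by simpa [leafSet] using hm2
              rw [e1x] at hx1; rw [e2x] at hx2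
              exact hp.right.disj y hx1 hx2
          | node e₁ e₂ =>
              -- sizes
              have hsz : a.numLeaves + d₁.numLeaves + d₂.numLeaves ≤ n + 1 := by
                have := hn
                simp only [numLeaves_node] at this
                omega
              have hpos₁ := numLeaves_pos d₁
              have hpos₂ := numLeaves_pos d₂
              have hsz₁ : (node a d₁).numLeaves ≤ n := by
                simp only [numLeaves_node]; omega
              have hsz₂ : (node a d₂).numLeaves ≤ n := by
                simp only [numLeaves_node]; omega
              have hp_swap : (node a (node d₂ d₁)).IsPhylo := isPhylo_inner_swap hp
              have hpa₁ : (node a d₁).IsPhylo := hp.collapse₁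
              have hpa₂ : (node a d₂).IsPhylo := hp_swap.collapse₁
              rcases children_match hU hp hA with ⟨hm1, hm2⟩ | ⟨hm1, hm2⟩
              · -- e₁ ↔ d₁, e₂ ↔ d₂
                have u₁ : URel (node a d₁) (node b e₁) :=
                  urel_restrict_split hU hp hA hm1
                have u₂ : URel (node a d₂) (node b e₂) :=
                  urel_restrict_split (urel_inner_swap₂ (urel_inner_swap₁ hU))
                    hp_swap hA hm2
                exact RIso.pair (IH hsz₁ u₁ hpa₁ hA) (IH hsz₂ u₂ hpa₂ hA)
              · -- e₁ ↔ d₂, e₂ ↔ d₁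
                have u₁ : URel (node a d₂) (node b e₁) :=
                  urel_restrict_split (urel_inner_swap₁ hU) hp_swap hA hm1
                have u₂ : URel (node a d₁) (node b e₂) :=
                  urel_restrict_split (urel_inner_swap₂ hU) hp hA hm2
                exact RIso.pair_swap (IH hsz₁ u₂ hpa₁ hA) (IH hsz₂ u₁ hpa₂ hA)

/-- **Split uniqueness**: if two `URel`-related phylogenetic trees have root splits
with the same leaf sets, the corresponding rooted subtrees are isomorphic. -/
theorem split_unique {a d b e : RTree L}
    (hU : URel (node a d) (node b e)) (hp : (node a d).IsPhylo)
    (hA : a.leafSet = b.leafSet) : RIso a b ∧ RIso d e := by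
  refine ⟨?_, su_side _ le_rfl hU hp hA⟩
  have hDE : d.leafSet = e.leafSet := urel_second_leafSet hU hp hA
  exact su_side (node d a).numLeaves le_rfl (urel_swap_both hU) hp.swap hDE

/-- Crossed version of split uniqueness. -/
theorem split_unique_cross {a d b e : RTree L}
    (hU : URel (node a d) (node b e)) (hp : (node a d).IsPhylo)
    (hA : a.leafSet = e.leafSet) : RIso a e ∧ RIso d b := by
  have hU' : URel (node a d) (node e b) :=
    urel_trans hU (urel_of_riso (RIso.pair_swap (RIso.refl b) (RIso.refl e)))
  exact split_unique hU' hp hA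

end RTree
namespace RTree

variable {L : Type}

theorem IsPhylo.join {x y : RTree L} (hx : x.IsPhylo) (hy : y.IsPhylo)
    (hd : ∀ a ∈ x.leafList, a ∉ y.leafList) : (node x y).IsPhylo := by
  simp only [IsPhylo, leafList_node, List.nodup_append]
  exact ⟨hx, hy, fun a ha b hb hab => by subst hab; exact hd a ha hb⟩

/-- The star lemma: two `URel`-related phylogenetic trees assembled from the same
three blocks in the two relevant shapes have isomorphic blocks. -/
theorem tri {p₁ p₂ p₃ q₁ q₂ q₃ : RTree L}
    (hU : URel (node (node p₁ p₂) p₃) (node (node q₁ q₃) q₂))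
    (hp : (node (node p₁ p₂) p₃).IsPhylo)
    (h1 : p₁.leafSet = q₁.leafSet) (h2 : p₂.leafSet = q₂.leafSet)
    (h3 : p₃.leafSet = q₃.leafSet) :
    RIso p₁ q₁ ∧ RIso p₂ q₂ ∧ RIso p₃ q₃ := by
  classical
  have d12 : ∀ x ∈ p₁.leafList, x ∉ p₂.leafList := hp.left.disj
  have d13 : ∀ x ∈ p₁.leafList, x ∉ p₃.leafList := by
    intro x hx
    exact hp.disj x (by simp [hx])
  have d23 : ∀ x ∈ p₂.leafList, x ∉ p₃.leafList := by
    intro x hx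
    exact hp.disj x (by simp [hx])
  have m1 : ∀ x : L, x ∈ q₁.leafList → x ∈ p₁.leafList := by
    intro x hx
    have : x ∈ p₁.leafSet := by rw [h1]; exact hx
    exact this
  have m2 : ∀ x : L, x ∈ q₂.leafList → x ∈ p₂.leafList := by
    intro x hx
    have : x ∈ p₂.leafSet := by rw [h2]; exact hx
    exact this
  have m3 : ∀ x : L, x ∈ q₃.leafList → x ∈ p₃.leafList := by
    intro x hx
    have : x ∈ p₃.leafSet := by rw [h3]; exact hx
    exact this
  -- first restriction : keep blocks 1 and 3
  have main13 : URel (node p₁ p₃) (node q₁ q₃) := by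
    set P : L → Bool := fun x => decide (x ∈ p₁.leafList ∨ x ∈ p₃.leafList) with hPdef
    have r₁ : restrict (node (node p₁ p₂) p₃) P = some (node p₁ p₃) := by
      rw [restrict_node, restrict_node,
        restrict_all (T := p₁) (fun x hx => by simp [hPdef, hx]),
        restrict_none (T := p₂) (fun x hx => by
          simp only [hPdef, decide_eq_false_iff_not]
          rintro (h | h)
          · exact d12 x h hx
          · exact d23 x hx h),
        restrict_all (T := p₃) (fun x hx => by simp [hPdef, hx])]
    have r₂ : restrict (node (node q₁ q₃) q₂) P = some (node q₁ q₃) := by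
      rw [restrict_node, restrict_node,
        restrict_all (T := q₁) (fun x hx => by simp [hPdef, m1 x hx]),
        restrict_all (T := q₃) (fun x hx => by simp [hPdef, m3 x hx]),
        restrict_none (T := q₂) (fun x hx => by
          simp only [hPdef, decide_eq_false_iff_not]
          rintro (h | h)
          · exact d12 x h (m2 x hx)
          · exact d23 x (m2 x hx) h)]
    rcases urel_restrict hU P with ⟨e1, _⟩ | ⟨t, t', e1, e2, hu⟩
    · rw [r₁] at e1; cases e1
    · rw [r₁] at e1; rw [r₂] at e2; cases e1; cases e2; exact hu
  have main23 : URel (node p₂ p₃) (node q₃ q₂) := by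
    set P : L → Bool := fun x => decide (x ∈ p₂.leafList ∨ x ∈ p₃.leafList) with hPdef
    have r₁ : restrict (node (node p₁ p₂) p₃) P = some (node p₂ p₃) := by
      rw [restrict_node, restrict_node,
        restrict_none (T := p₁) (fun x hx => by
          simp only [hPdef, decide_eq_false_iff_not]
          rintro (h | h)
          · exact d12 x hx h
          · exact d13 x hx h),
        restrict_all (T := p₂) (fun x hx => by simp [hPdef, hx]),
        restrict_all (T := p₃) (fun x hx => by simp [hPdef, hx])]
    have r₂ : restrict (node (node q₁ q₃) q₂) P = some (node q₃ q₂) := by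
      rw [restrict_node, restrict_node,
        restrict_none (T := q₁) (fun x hx => by
          simp only [hPdef, decide_eq_false_iff_not]
          rintro (h | h)
          · exact d12 x (m1 x hx) h
          · exact d13 x (m1 x hx) h),
        restrict_all (T := q₃) (fun x hx => by simp [hPdef, m3 x hx]),
        restrict_all (T := q₂) (fun x hx => by simp [hPdef, m2 x hx])]
    rcases urel_restrict hU P with ⟨e1, _⟩ | ⟨t, t', e1, e2, hu⟩
    · rw [r₁] at e1; cases e1
    · rw [r₁] at e1; rw [r₂] at e2; cases e1; cases e2; exact hu
  have hp13 : (node p₁ p₃).IsPhylo :=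
    IsPhylo.join hp.left.left hp.right d13
  have hp23 : (node p₂ p₃).IsPhylo :=
    IsPhylo.join hp.left.right hp.right d23
  obtain ⟨i1, i3⟩ := split_unique main13 hp13 h1
  obtain ⟨i2, _⟩ := split_unique_cross main23 hp23 h2
  exact ⟨i1, i2, i3⟩

end RTree
namespace RTree

variable {L : Type}

theorem bound_of_riso {w v X Y : RTree L} {R : ℕ} (hi : RIso w v)
    (hw : Embeds w X) (hv : Embeds v Y)
    (hb : ∀ S, Embeds S X → Embeds S Y → S.numLeaves ≤ R) : w.numLeaves ≤ R :=
  hb w hw (Embeds.of_riso hi hv)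

/-- Two-part case of the main bound. -/
theorem step_pair {a₁ a₂ b₁ b₂ X₁ X₂ Y₁ Y₂ : RTree L} {R : ℕ}
    (hU : URel (node a₁ a₂) (node b₁ b₂)) (hp : (node a₁ a₂).IsPhylo)
    (h1 : a₁.leafSet = b₁.leafSet)
    (ea₁ : Embeds a₁ X₁) (ea₂ : Embeds a₂ X₂)
    (eb₁ : Embeds b₁ Y₁) (eb₂ : Embeds b₂ Y₂)
    (hb₁ : ∀ S, Embeds S X₁ → Embeds S Y₁ → S.numLeaves ≤ R)
    (hb₂ : ∀ S, Embeds S X₂ → Embeds S Y₂ → S.numLeaves ≤ R) :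
    (node a₁ a₂).numLeaves ≤ 2 * R := by
  obtain ⟨i1, i2⟩ := split_unique hU hp h1
  have q1 := bound_of_riso i1 ea₁ eb₁ hb₁
  have q2 := bound_of_riso i2 ea₂ eb₂ hb₂
  simp only [numLeaves_node]
  omega

/-- Two-part crossed case of the main bound. -/
theorem step_pair_cross {a₁ a₂ b₁ b₂ X₁ X₂ Y₁ Y₂ : RTree L} {R : ℕ}
    (hU : URel (node a₁ a₂) (node b₁ b₂)) (hp : (node a₁ a₂).IsPhylo)
    (h1 : a₁.leafSet = b₂.leafSet)
    (ea₁ : Embeds a₁ X₁) (ea₂ : Embeds a₂ X₂)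
    (eb₁ : Embeds b₁ Y₁) (eb₂ : Embeds b₂ Y₂)
    (hb₁ : ∀ S, Embeds S X₁ → Embeds S Y₂ → S.numLeaves ≤ R)
    (hb₂ : ∀ S, Embeds S X₂ → Embeds S Y₁ → S.numLeaves ≤ R) :
    (node a₁ a₂).numLeaves ≤ 2 * R := by
  obtain ⟨i1, i2⟩ := split_unique_cross hU hp h1
  have q1 := bound_of_riso i1 ea₁ eb₂ hb₁
  have q2 := bound_of_riso i2 ea₂ eb₁ hb₂
  simp only [numLeaves_node]
  omega

/-- Three-part case of the main bound. -/
theorem step_tri {p₁ p₂ p₃ q₁ q₂ q₃ X₁ X₂ X₃ Y₁ Y₂ Y₃ : RTree L} {R : ℕ}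
    (hU : URel (node (node p₁ p₂) p₃) (node (node q₁ q₃) q₂))
    (hp : (node (node p₁ p₂) p₃).IsPhylo)
    (h1 : p₁.leafSet = q₁.leafSet) (h2 : p₂.leafSet = q₂.leafSet)
    (h3 : p₃.leafSet = q₃.leafSet)
    (e1 : Embeds p₁ X₁) (e2 : Embeds p₂ X₂) (e3 : Embeds p₃ X₃)
    (f1 : Embeds q₁ Y₁) (f2 : Embeds q₂ Y₂) (f3 : Embeds q₃ Y₃)
    (hb1 : ∀ S, Embeds S X₁ → Embeds S Y₁ → S.numLeaves ≤ R)
    (hb2 : ∀ S, Embeds S X₂ → Embeds S Y₂ → S.numLeaves ≤ R)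
    (hb3 : ∀ S, Embeds S X₃ → Embeds S Y₃ → S.numLeaves ≤ R) :
    (node (node p₁ p₂) p₃).numLeaves ≤ 3 * R := by
  obtain ⟨i1, i2, i3⟩ := tri hU hp h1 h2 h3
  have q1 := bound_of_riso i1 e1 f1 hb1
  have q2 := bound_of_riso i2 e2 f2 hb2
  have q3 := bound_of_riso i3 e3 f3 hb3
  simp only [numLeaves_node]
  omega

/-- Four nonempty parts are impossible. -/
theorem step_4contra {w₁ w₂ w₃ w₄ b₁ b₂ : RTree L} {Λ₁ Λ₂ Λ₃ Λ₄ : Set L}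
    (hU : URel (node (node w₁ w₂) (node w₃ w₄)) (node b₁ b₂))
    (hp : (node (node w₁ w₂) (node w₃ w₄)).IsPhylo)
    (s1 : ∀ x ∈ w₁.leafSet, x ∈ Λ₁) (s2 : ∀ x ∈ w₂.leafSet, x ∈ Λ₂)
    (s3 : ∀ x ∈ w₃.leafSet, x ∈ Λ₃) (s4 : ∀ x ∈ w₄.leafSet, x ∈ Λ₄)
    (t1 : ∀ x ∈ b₁.leafSet, x ∈ Λ₁ ∪ Λ₃) (t2 : ∀ x ∈ b₂.leafSet, x ∈ Λ₂ ∪ Λ₄)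
    (d12 : ∀ x, x ∈ Λ₁ → x ∉ Λ₂) (d13 : ∀ x, x ∈ Λ₁ → x ∉ Λ₃)
    (d14 : ∀ x, x ∈ Λ₁ → x ∉ Λ₄) (d23 : ∀ x, x ∈ Λ₂ → x ∉ Λ₃)
    (d24 : ∀ x, x ∈ Λ₂ → x ∉ Λ₄) (d34 : ∀ x, x ∈ Λ₃ → x ∉ Λ₄) : False := by
  have hp2 : (node b₁ b₂).IsPhylo := hU.isPhylo hp
  have hG : (node (node w₁ w₂) (node w₃ w₄)).leafSet = (node b₁ b₂).leafSet :=
    hU.leafSet_eq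
  obtain ⟨x1, hx1⟩ := exists_leaf w₁
  obtain ⟨x2, hx2⟩ := exists_leaf w₂
  obtain ⟨x3, hx3⟩ := exists_leaf w₃
  obtain ⟨x4, hx4⟩ := exists_leaf w₄
  have hx1' : x1 ∈ w₁.leafSet := hx1
  have hx2' : x2 ∈ w₂.leafSet := hx2
  have hx3' : x3 ∈ w₃.leafSet := hx3
  have hx4' : x4 ∈ w₄.leafSet := hx4
  have cX : ClOrCo (node (node w₁ w₂) (node w₃ w₄)) (node w₁ w₂).leafSet :=
    ⟨node w₁ w₂, Sub.left (Sub.refl _), Or.inl rfl⟩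
  have cY : ClOrCo (node (node w₁ w₂) (node w₃ w₄)) b₁.leafSet :=
    urel_clorco (urel_symm hU) hp2 ⟨b₁, Sub.left (Sub.refl _), Or.inl rfl⟩
  -- memberships of the four leaves in S₂
  have hmem : ∀ z : L, z ∈ (node (node w₁ w₂) (node w₃ w₄)).leafSet →
      z ∈ b₁.leafSet ∨ z ∈ b₂.leafSet := by
    intro z hz
    have : z ∈ (node b₁ b₂).leafSet := by rw [← hG]; exact hz
    simpa using this
  have hXsub : ∀ z, z ∈ (node w₁ w₂).leafSet → z ∈ Λ₁ ∨ z ∈ Λ₂ := by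
    intro z hz
    rcases (by simpa using hz : z ∈ w₁.leafSet ∨ z ∈ w₂.leafSet) with h | h
    exacts [Or.inl (s1 z h), Or.inr (s2 z h)]
  -- x1 : in X and in Y
  have hx1X : x1 ∈ (node w₁ w₂).leafSet := by simp [hx1']
  have hx1G : x1 ∈ (node (node w₁ w₂) (node w₃ w₄)).leafSet := by simp [hx1']
  have hx1Y : x1 ∈ b₁.leafSet := by
    rcases hmem x1 hx1G with h | h
    · exact h
    · rcases t2 x1 h with h' | h'
      · exact absurd h' (d12 x1 (s1 x1 hx1'))
      · exact absurd h' (d14 x1 (s1 x1 hx1'))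
  -- x2 : in X not in Y
  have hx2X : x2 ∈ (node w₁ w₂).leafSet := by simp [hx2']
  have hx2Y : x2 ∉ b₁.leafSet := by
    intro h
    rcases t1 x2 h with h' | h'
    · exact d12 x2 h' (s2 x2 hx2')
    · exact d23 x2 (s2 x2 hx2') h'
  -- x3 : in Y not in X
  have hx3G : x3 ∈ (node (node w₁ w₂) (node w₃ w₄)).leafSet := by simp [hx3']
  have hx3Y : x3 ∈ b₁.leafSet := by
    rcases hmem x3 hx3G with h | h
    · exact h
    · rcases t2 x3 h with h' | h'
      · exact absurd h' (fun hh => d23 x3 hh (s3 x3 hx3'))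
      · exact absurd h' (d34 x3 (s3 x3 hx3'))
  have hx3X : x3 ∉ (node w₁ w₂).leafSet := by
    intro h
    rcases hXsub x3 h with h' | h'
    · exact d13 x3 h' (s3 x3 hx3')
    · exact d23 x3 h' (s3 x3 hx3')
  -- x4 : in neither
  have hx4G : x4 ∈ (node (node w₁ w₂) (node w₃ w₄)).leafSet := by simp [hx4']
  have hx4X : x4 ∉ (node w₁ w₂).leafSet := by
    intro h
    rcases hXsub x4 h with h' | h'
    · exact d14 x4 h' (s4 x4 hx4')
    · exact d24 x4 h' (s4 x4 hx4')
  have hx4Y : x4 ∉ b₁.leafSet := by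
    intro h
    rcases t1 x4 h with h' | h'
    · exact d14 x4 h' (s4 x4 hx4')
    · exact d34 x4 h' (s4 x4 hx4')
  exact compat4_contra hp cX cY ⟨x1, hx1X, hx1Y⟩ ⟨x2, hx2X, hx2Y⟩
    ⟨x3, hx3Y, hx3X⟩ ⟨x4, hx4G, hx4X, hx4Y⟩

end RTree
namespace RTree

variable {L : Type}

theorem riso_numLeaves {S T : RTree L} (h : RIso S T) : S.numLeaves = T.numLeaves :=
  h.perm.length_eq

theorem riso_isPhylo {S T : RTree L} (h : RIso S T) (hp : T.IsPhylo) : S.IsPhylo :=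
  h.perm.nodup_iff.mpr hp

theorem step_pair_flex {S₁ S₂ a₁ a₂ b₁ b₂ X₁ X₂ Y₁ Y₂ : RTree L} {R : ℕ}
    (hU : URel S₁ S₂) (hp : S₁.IsPhylo)
    (i1 : RIso (node a₁ a₂) S₁) (i2 : RIso (node b₁ b₂) S₂)
    (h1 : a₁.leafSet = b₁.leafSet)
    (ea₁ : Embeds a₁ X₁) (ea₂ : Embeds a₂ X₂)
    (eb₁ : Embeds b₁ Y₁) (eb₂ : Embeds b₂ Y₂)
    (hb₁ : ∀ S, Embeds S X₁ → Embeds S Y₁ → S.numLeaves ≤ R)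
    (hb₂ : ∀ S, Embeds S X₂ → Embeds S Y₂ → S.numLeaves ≤ R) :
    S₁.numLeaves ≤ 2 * R := by
  have hU' : URel (node a₁ a₂) (node b₁ b₂) :=
    urel_trans (urel_of_riso i1) (urel_trans hU (urel_symm (urel_of_riso i2)))
  have h := step_pair hU' (riso_isPhylo i1 hp) h1 ea₁ ea₂ eb₁ eb₂ hb₁ hb₂
  rw [← riso_numLeaves i1]
  exact h

theorem step_tri_flex {S₁ S₂ p₁ p₂ p₃ q₁ q₂ q₃ X₁ X₂ X₃ Y₁ Y₂ Y₃ : RTree L} {R : ℕ}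
    (hU : URel S₁ S₂) (hp : S₁.IsPhylo)
    (i1 : RIso (node (node p₁ p₂) p₃) S₁) (i2 : RIso (node (node q₁ q₃) q₂) S₂)
    (h1 : p₁.leafSet = q₁.leafSet) (h2 : p₂.leafSet = q₂.leafSet)
    (h3 : p₃.leafSet = q₃.leafSet)
    (e1 : Embeds p₁ X₁) (e2 : Embeds p₂ X₂) (e3 : Embeds p₃ X₃)
    (f1 : Embeds q₁ Y₁) (f2 : Embeds q₂ Y₂) (f3 : Embeds q₃ Y₃)
    (hb1 : ∀ S, Embeds S X₁ → Embeds S Y₁ → S.numLeaves ≤ R)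
    (hb2 : ∀ S, Embeds S X₂ → Embeds S Y₂ → S.numLeaves ≤ R)
    (hb3 : ∀ S, Embeds S X₃ → Embeds S Y₃ → S.numLeaves ≤ R) :
    S₁.numLeaves ≤ 3 * R := by
  have hU' : URel (node (node p₁ p₂) p₃) (node (node q₁ q₃) q₂) :=
    urel_trans (urel_of_riso i1) (urel_trans hU (urel_symm (urel_of_riso i2)))
  have h := step_tri hU' (riso_isPhylo i1 hp) h1 h2 h3 e1 e2 e3 f1 f2 f3 hb1 hb2 hb3
  rw [← riso_numLeaves i1]
  exact h

theorem step_4contra_flex {S₁ S₂ w₁ w₂ w₃ w₄ b₁ b₂ : RTree L} {Λ₁ Λ₂ Λ₃ Λ₄ : Set L}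
    (hU : URel S₁ S₂) (hp : S₁.IsPhylo)
    (i1 : RIso (node (node w₁ w₂) (node w₃ w₄)) S₁) (i2 : RIso (node b₁ b₂) S₂)
    (s1 : ∀ x ∈ w₁.leafSet, x ∈ Λ₁) (s2 : ∀ x ∈ w₂.leafSet, x ∈ Λ₂)
    (s3 : ∀ x ∈ w₃.leafSet, x ∈ Λ₃) (s4 : ∀ x ∈ w₄.leafSet, x ∈ Λ₄)
    (t1 : ∀ x ∈ b₁.leafSet, x ∈ Λ₁ ∪ Λ₃) (t2 : ∀ x ∈ b₂.leafSet, x ∈ Λ₂ ∪ Λ₄)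
    (d12 : ∀ x, x ∈ Λ₁ → x ∉ Λ₂) (d13 : ∀ x, x ∈ Λ₁ → x ∉ Λ₃)
    (d14 : ∀ x, x ∈ Λ₁ → x ∉ Λ₄) (d23 : ∀ x, x ∈ Λ₂ → x ∉ Λ₃)
    (d24 : ∀ x, x ∈ Λ₂ → x ∉ Λ₄) (d34 : ∀ x, x ∈ Λ₃ → x ∉ Λ₄) : False := by
  have hU' : URel (node (node w₁ w₂) (node w₃ w₄)) (node b₁ b₂) :=
    urel_trans (urel_of_riso i1) (urel_trans hU (urel_symm (urel_of_riso i2)))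
  exact step_4contra hU' (riso_isPhylo i1 hp) s1 s2 s3 s4 t1 t2 d12 d13 d14 d23 d24 d34

/-- Matching the three parts of two partitions of a common leaf set. -/
theorem parts_eq3 {u₁ u₂ u₃ v₁ v₂ v₃ S₁ S₂ : RTree L} {Λ M N : Set L}
    (hmem : ∀ x, x ∈ S₁.leafList ↔ x ∈ S₂.leafList)
    (hS₁ : ∀ x, x ∈ S₁.leafList ↔ (x ∈ u₁.leafList ∨ x ∈ u₂.leafList ∨ x ∈ u₃.leafList))
    (hS₂ : ∀ x, x ∈ S₂.leafList ↔ (x ∈ v₁.leafList ∨ x ∈ v₂.leafList ∨ x ∈ v₃.leafList))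
    (hu₁ : ∀ x ∈ u₁.leafList, x ∈ Λ) (hu₂ : ∀ x ∈ u₂.leafList, x ∈ M)
    (hu₃ : ∀ x ∈ u₃.leafList, x ∈ N)
    (hv₁ : ∀ x ∈ v₁.leafList, x ∈ Λ) (hv₂ : ∀ x ∈ v₂.leafList, x ∈ M)
    (hv₃ : ∀ x ∈ v₃.leafList, x ∈ N)
    (dΛM : ∀ x, x ∈ Λ → x ∉ M) (dΛN : ∀ x, x ∈ Λ → x ∉ N)
    (dMN : ∀ x, x ∈ M → x ∉ N) :
    u₁.leafSet = v₁.leafSet ∧ u₂.leafSet = v₂.leafSet ∧ u₃.leafSet = v₃.leafSet := by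
  refine ⟨Set.ext fun x => ⟨fun hx => ?_, fun hx => ?_⟩,
    Set.ext fun x => ⟨fun hx => ?_, fun hx => ?_⟩,
    Set.ext fun x => ⟨fun hx => ?_, fun hx => ?_⟩⟩
  · have hx' : x ∈ u₁.leafList := hx
    rcases (hS₂ x).mp ((hmem x).mp ((hS₁ x).mpr (Or.inl hx'))) with h | h | h
    · exact h
    · exact absurd (hv₂ x h) (dΛM x (hu₁ x hx'))
    · exact absurd (hv₃ x h) (dΛN x (hu₁ x hx'))
  · have hx' : x ∈ v₁.leafList := hx
    rcases (hS₁ x).mp ((hmem x).mpr ((hS₂ x).mpr (Or.inl hx'))) with h | h | h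
    · exact h
    · exact absurd (hu₂ x h) (dΛM x (hv₁ x hx'))
    · exact absurd (hu₃ x h) (dΛN x (hv₁ x hx'))
  · have hx' : x ∈ u₂.leafList := hx
    rcases (hS₂ x).mp ((hmem x).mp ((hS₁ x).mpr (Or.inr (Or.inl hx')))) with h | h | h
    · exact absurd (hu₂ x hx') (dΛM x (hv₁ x h))
    · exact h
    · exact absurd (hv₃ x h) (dMN x (hu₂ x hx'))
  · have hx' : x ∈ v₂.leafList := hx
    rcases (hS₁ x).mp ((hmem x).mpr ((hS₂ x).mpr (Or.inr (Or.inl hx')))) with h | h | h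
    · exact absurd (hv₂ x hx') (dΛM x (hu₁ x h))
    · exact h
    · exact absurd (hu₃ x h) (dMN x (hv₂ x hx'))
  · have hx' : x ∈ u₃.leafList := hx
    rcases (hS₂ x).mp ((hmem x).mp ((hS₁ x).mpr (Or.inr (Or.inr hx')))) with h | h | h
    · exact absurd (hu₃ x hx') (dΛN x (hv₁ x h))
    · exact absurd (hu₃ x hx') (dMN x (hv₂ x h))
    · exact h
  · have hx' : x ∈ v₃.leafList := hx
    rcases (hS₁ x).mp ((hmem x).mpr ((hS₂ x).mpr (Or.inr (Or.inr hx')))) with h | h | h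
    · exact absurd (hv₃ x hx') (dΛN x (hu₁ x h))
    · exact absurd (hv₃ x hx') (dMN x (hu₂ x h))
    · exact h

/-- Matching the two parts of two partitions of a common leaf set. -/
theorem parts_eq2 {u₁ u₂ v₁ v₂ S₁ S₂ : RTree L} {Λ M : Set L}
    (hmem : ∀ x, x ∈ S₁.leafList ↔ x ∈ S₂.leafList)
    (hS₁ : ∀ x, x ∈ S₁.leafList ↔ (x ∈ u₁.leafList ∨ x ∈ u₂.leafList))
    (hS₂ : ∀ x, x ∈ S₂.leafList ↔ (x ∈ v₁.leafList ∨ x ∈ v₂.leafList))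
    (hu₁ : ∀ x ∈ u₁.leafList, x ∈ Λ) (hu₂ : ∀ x ∈ u₂.leafList, x ∈ M)
    (hv₁ : ∀ x ∈ v₁.leafList, x ∈ Λ) (hv₂ : ∀ x ∈ v₂.leafList, x ∈ M)
    (dΛM : ∀ x, x ∈ Λ → x ∉ M) :
    u₁.leafSet = v₁.leafSet := by
  refine Set.ext fun x => ⟨fun hx => ?_, fun hx => ?_⟩
  · have hx' : x ∈ u₁.leafList := hx
    rcases (hS₂ x).mp ((hmem x).mp ((hS₁ x).mpr (Or.inl hx'))) with h | h
    · exact h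
    · exact absurd (hv₂ x h) (dΛM x (hu₁ x hx'))
  · have hx' : x ∈ v₁.leafList := hx
    rcases (hS₁ x).mp ((hmem x).mpr ((hS₂ x).mpr (Or.inl hx'))) with h | h
    · exact h
    · exact absurd (hu₂ x h) (dΛM x (hv₁ x hx'))

end RTree
namespace RTree

variable {L : Type}

set_option maxHeartbeats 4000000 in
theorem main_step
    {B₁ B₂ B₃ B₄ C₁ C₂ C₃ C₄ : RTree L} {R U : ℕ}
    (hs₁ : B₁.leafSet = C₁.leafSet) (hs₂ : B₂.leafSet = C₂.leafSet)
    (hs₃ : B₃.leafSet = C₃.leafSet) (hs₄ : B₄.leafSet = C₄.leafSet)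
    (d12 : ∀ x, x ∈ B₁.leafSet → x ∉ B₂.leafSet)
    (d13 : ∀ x, x ∈ B₁.leafSet → x ∉ B₃.leafSet)
    (d14 : ∀ x, x ∈ B₁.leafSet → x ∉ B₄.leafSet)
    (d23 : ∀ x, x ∈ B₂.leafSet → x ∉ B₃.leafSet)
    (d24 : ∀ x, x ∈ B₂.leafSet → x ∉ B₄.leafSet)
    (d34 : ∀ x, x ∈ B₃.leafSet → x ∉ B₄.leafSet)
    (hb₁ : ∀ S : RTree L, Embeds S B₁ → Embeds S C₁ → S.numLeaves ≤ R)
    (hb₂ : ∀ S : RTree L, Embeds S B₂ → Embeds S C₂ → S.numLeaves ≤ R)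
    (hb₃ : ∀ S : RTree L, Embeds S B₃ → Embeds S C₃ → S.numLeaves ≤ R)
    (hb₄ : ∀ S : RTree L, Embeds S B₄ → Embeds S C₄ → S.numLeaves ≤ R)
    (hu₁ : ∀ S₁ S₂ : RTree L, S₁.IsPhylo → URel S₁ S₂ → Embeds S₁ B₁ →
      Embeds S₂ C₁ → S₁.numLeaves ≤ U)
    (hu₂ : ∀ S₁ S₂ : RTree L, S₁.IsPhylo → URel S₁ S₂ → Embeds S₁ B₂ →
      Embeds S₂ C₂ → S₁.numLeaves ≤ U)
    (hu₃ : ∀ S₁ S₂ : RTree L, S₁.IsPhylo → URel S₁ S₂ → Embeds S₁ B₃ →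
      Embeds S₂ C₃ → S₁.numLeaves ≤ U)
    (hu₄ : ∀ S₁ S₂ : RTree L, S₁.IsPhylo → URel S₁ S₂ → Embeds S₁ B₄ →
      Embeds S₂ C₄ → S₁.numLeaves ≤ U) :
    ∀ S₁ S₂ : RTree L, S₁.IsPhylo → URel S₁ S₂ →
      Embeds S₁ (node (node B₁ B₂) (node B₃ B₄)) →
      Embeds S₂ (node (node C₁ C₃) (node C₂ C₄)) →
      S₁.numLeaves ≤ max U (3 * R) := by
  have memsplit : ∀ {t P Q : RTree L}, Embeds t (node P Q) →
      ∀ x ∈ t.leafList, x ∈ P.leafList ∨ x ∈ Q.leafList :=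
    fun h x hx => List.mem_append.mp (h.mem_leafList x hx)
  have c1b : ∀ x, x ∈ C₁.leafList → x ∈ B₁.leafSet := fun x hx => by rw [hs₁]; exact hx
  have c2b : ∀ x, x ∈ C₂.leafList → x ∈ B₂.leafSet := fun x hx => by rw [hs₂]; exact hx
  have c3b : ∀ x, x ∈ C₃.leafList → x ∈ B₃.leafSet := fun x hx => by rw [hs₃]; exact hx
  have c4b : ∀ x, x ∈ C₄.leafList → x ∈ B₄.leafSet := fun x hx => by rw [hs₄]; exact hx
  have fin2 : ∀ {m : ℕ}, m ≤ 2 * R → m ≤ max U (3 * R) :=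
    fun h => le_trans h (le_trans (by omega) (le_max_right _ _))
  have fin3 : ∀ {m : ℕ}, m ≤ 3 * R → m ≤ max U (3 * R) :=
    fun h => le_trans h (le_max_right _ _)
  have finU : ∀ {m : ℕ}, m ≤ U → m ≤ max U (3 * R) :=
    fun h => le_trans h (le_max_left _ _)
  -- ### case: S₁ in the left half, S₂ split at the root
  have caseLP : ∀ T b₁ b₂ : RTree L, T.IsPhylo → URel T (node b₁ b₂) →
      Embeds T (node B₁ B₂) → Embeds b₁ (node C₁ C₃) → Embeds b₂ (node C₂ C₄) →
      T.numLeaves ≤ max U (3 * R) := by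
    intro T b₁ b₂ hphy hU h1 h2a h2b
    have hmem : ∀ x, x ∈ T.leafList ↔ x ∈ (node b₁ b₂).leafList :=
      fun x => hU.perm.mem_iff
    have hb₁1 : ∀ x ∈ b₁.leafList, x ∈ B₁.leafSet := by
      intro x hx
      have hxT : x ∈ T.leafList := (hmem x).mpr (by simp [hx])
      rcases memsplit h1 x hxT with h | h
      · exact h
      · rcases memsplit h2a x hx with h' | h'
        · exact absurd h (d12 x (c1b x h'))
        · exact absurd (c3b x h') (d23 x h)
    have hb₂2 : ∀ x ∈ b₂.leafList, x ∈ B₂.leafSet := by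
      intro x hx
      have hxT : x ∈ T.leafList := (hmem x).mpr (by simp [hx])
      rcases memsplit h2b x hx with h' | h'
      · exact c2b x h'
      · exfalso
        rcases memsplit h1 x hxT with h | h
        · exact d14 x h (c4b x h')
        · exact d24 x h (c4b x h')
    have pb₁ : Embeds b₁ C₁ :=
      prune_right h2a (fun x hx hC => d13 x (hb₁1 x hx) (c3b x hC))
    have pb₂ : Embeds b₂ C₂ :=
      prune_right h2b (fun x hx hC => d24 x (hb₂2 x hx) (c4b x hC))
    cases h1 with
    | left h1' =>
        exfalso
        obtain ⟨y, hy⟩ := exists_leaf b₂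
        have hyT : y ∈ T.leafList := (hmem y).mpr (by simp [hy])
        exact d12 y (h1'.mem_leafList y hyT) (hb₂2 y hy)
    | right h1' =>
        exfalso
        obtain ⟨y, hy⟩ := exists_leaf b₁
        have hyT : y ∈ T.leafList := (hmem y).mpr (by simp [hy])
        exact d12 y (hb₁1 y hy) (h1'.mem_leafList y hyT)
    | @pair w₁ w₂ _ _ hw₁ hw₂ =>
        have heq : w₁.leafSet = b₁.leafSet :=
          parts_eq2 (Λ := B₁.leafSet) (M := B₂.leafSet) hmem
            (by intro x; simp) (by intro x; simp)
            (fun x hx => hw₁.mem_leafList x hx) (fun x hx => hw₂.mem_leafList x hx)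
            hb₁1 hb₂2 d12
        exact fin2 (step_pair_flex hU hphy (RIso.refl _) (RIso.refl _) heq
          hw₁ hw₂ pb₁ pb₂ hb₁ hb₂)
    | @pair_swap w₁ w₂ _ _ hw₁ hw₂ =>
        -- w₁ ⪯ B₂, w₂ ⪯ B₁
        have heq : w₂.leafSet = b₁.leafSet :=
          parts_eq2 (Λ := B₁.leafSet) (M := B₂.leafSet) hmem
            (by intro x; simp; try tauto) (by intro x; simp)
            (fun x hx => hw₂.mem_leafList x hx) (fun x hx => hw₁.mem_leafList x hx)
            hb₁1 hb₂2 d12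
        exact fin2 (step_pair_flex hU hphy
          (RIso.pair_swap (RIso.refl w₂) (RIso.refl w₁)) (RIso.refl _) heq
          hw₂ hw₁ pb₁ pb₂ hb₁ hb₂)
  -- ### case: S₁ in the right half, S₂ split at the root
  have caseRP : ∀ T b₁ b₂ : RTree L, T.IsPhylo → URel T (node b₁ b₂) →
      Embeds T (node B₃ B₄) → Embeds b₁ (node C₁ C₃) → Embeds b₂ (node C₂ C₄) →
      T.numLeaves ≤ max U (3 * R) := by
    intro T b₁ b₂ hphy hU h1 h2a h2b
    have hmem : ∀ x, x ∈ T.leafList ↔ x ∈ (node b₁ b₂).leafList :=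
      fun x => hU.perm.mem_iff
    have hb₁3 : ∀ x ∈ b₁.leafList, x ∈ B₃.leafSet := by
      intro x hx
      have hxT : x ∈ T.leafList := (hmem x).mpr (by simp [hx])
      rcases memsplit h2a x hx with h' | h'
      · exfalso
        rcases memsplit h1 x hxT with h | h
        · exact d13 x (c1b x h') h
        · exact d14 x (c1b x h') h
      · exact c3b x h'
    have hb₂4 : ∀ x ∈ b₂.leafList, x ∈ B₄.leafSet := by
      intro x hx
      have hxT : x ∈ T.leafList := (hmem x).mpr (by simp [hx])
      rcases memsplit h2b x hx with h' | h'
      · exfalso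
        rcases memsplit h1 x hxT with h | h
        · exact d23 x (c2b x h') h
        · exact d24 x (c2b x h') h
      · exact c4b x h'
    have pb₁ : Embeds b₁ C₃ :=
      prune_left h2a (fun x hx hC => d13 x (c1b x hC) (hb₁3 x hx))
    have pb₂ : Embeds b₂ C₄ :=
      prune_left h2b (fun x hx hC => d24 x (c2b x hC) (hb₂4 x hx))
    cases h1 with
    | left h1' =>
        exfalso
        obtain ⟨y, hy⟩ := exists_leaf b₂
        have hyT : y ∈ T.leafList := (hmem y).mpr (by simp [hy])
        exact d34 y (h1'.mem_leafList y hyT) (hb₂4 y hy)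
    | right h1' =>
        exfalso
        obtain ⟨y, hy⟩ := exists_leaf b₁
        have hyT : y ∈ T.leafList := (hmem y).mpr (by simp [hy])
        exact d34 y (hb₁3 y hy) (h1'.mem_leafList y hyT)
    | @pair w₃ w₄ _ _ hw₃ hw₄ =>
        have heq : w₃.leafSet = b₁.leafSet :=
          parts_eq2 (Λ := B₃.leafSet) (M := B₄.leafSet) hmem
            (by intro x; simp) (by intro x; simp)
            (fun x hx => hw₃.mem_leafList x hx) (fun x hx => hw₄.mem_leafList x hx)
            hb₁3 hb₂4 d34
        exact fin2 (step_pair_flex hU hphy (RIso.refl _) (RIso.refl _) heq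
          hw₃ hw₄ pb₁ pb₂ hb₃ hb₄)
    | @pair_swap w₃ w₄ _ _ hw₃ hw₄ =>
        have heq : w₄.leafSet = b₁.leafSet :=
          parts_eq2 (Λ := B₃.leafSet) (M := B₄.leafSet) hmem
            (by intro x; simp; try tauto) (by intro x; simp)
            (fun x hx => hw₄.mem_leafList x hx) (fun x hx => hw₃.mem_leafList x hx)
            hb₁3 hb₂4 d34
        exact fin2 (step_pair_flex hU hphy
          (RIso.pair_swap (RIso.refl w₄) (RIso.refl w₃)) (RIso.refl _) heq
          hw₄ hw₃ pb₁ pb₂ hb₃ hb₄)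
  -- ### case: S₁ split at the root, S₂ in the left half of T₂
  have casePL : ∀ a₁ a₂ T₂ : RTree L, (node a₁ a₂).IsPhylo →
      URel (node a₁ a₂) T₂ → Embeds a₁ (node B₁ B₂) → Embeds a₂ (node B₃ B₄) →
      Embeds T₂ (node C₁ C₃) → (node a₁ a₂).numLeaves ≤ max U (3 * R) := by
    intro a₁ a₂ T₂ hphy hU h1a h1b h2
    have hmem : ∀ x, x ∈ (node a₁ a₂).leafList ↔ x ∈ T₂.leafList :=
      fun x => hU.perm.mem_iff
    have ha₁1 : ∀ x ∈ a₁.leafList, x ∈ B₁.leafSet := by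
      intro x hx
      have hxT : x ∈ T₂.leafList := (hmem x).mp (by simp [hx])
      rcases memsplit h1a x hx with h | h
      · exact h
      · exfalso
        rcases memsplit h2 x hxT with h' | h'
        · exact d12 x (c1b x h') h
        · exact d23 x h (c3b x h')
    have ha₂3 : ∀ x ∈ a₂.leafList, x ∈ B₃.leafSet := by
      intro x hx
      have hxT : x ∈ T₂.leafList := (hmem x).mp (by simp [hx])
      rcases memsplit h1b x hx with h | h
      · exact h
      · exfalso
        rcases memsplit h2 x hxT with h' | h'
        · exact d14 x (c1b x h') h
        · exact d34 x (c3b x h') h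
    have pa₁ : Embeds a₁ B₁ :=
      prune_right h1a (fun x hx hB => d12 x (ha₁1 x hx) hB)
    have pa₂ : Embeds a₂ B₃ :=
      prune_right h1b (fun x hx hB => d34 x (ha₂3 x hx) hB)
    cases h2 with
    | left h2' =>
        exfalso
        obtain ⟨y, hy⟩ := exists_leaf a₂
        have hyT : y ∈ T₂.leafList := (hmem y).mp (by simp [hy])
        exact d13 y (c1b y (h2'.mem_leafList y hyT)) (ha₂3 y hy)
    | right h2' =>
        exfalso
        obtain ⟨y, hy⟩ := exists_leaf a₁
        have hyT : y ∈ T₂.leafList := (hmem y).mp (by simp [hy])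
        exact d13 y (ha₁1 y hy) (c3b y (h2'.mem_leafList y hyT))
    | @pair v₁ v₃ _ _ hv₁ hv₃ =>
        have heq : a₁.leafSet = v₁.leafSet :=
          parts_eq2 (Λ := B₁.leafSet) (M := B₃.leafSet) hmem
            (by intro x; simp) (by intro x; simp)
            ha₁1 ha₂3
            (fun x hx => c1b x (hv₁.mem_leafList x hx))
            (fun x hx => c3b x (hv₃.mem_leafList x hx)) d13
        exact fin2 (step_pair_flex hU hphy (RIso.refl _) (RIso.refl _) heq
          pa₁ pa₂ hv₁ hv₃ hb₁ hb₃)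
    | @pair_swap v₁ v₃ _ _ hv₁ hv₃ =>
        -- v₁ ⪯ C₃, v₃ ⪯ C₁
        have heq : a₁.leafSet = v₃.leafSet :=
          parts_eq2 (Λ := B₁.leafSet) (M := B₃.leafSet) hmem
            (by intro x; simp) (by intro x; simp; try tauto)
            ha₁1 ha₂3
            (fun x hx => c1b x (hv₃.mem_leafList x hx))
            (fun x hx => c3b x (hv₁.mem_leafList x hx)) d13
        exact fin2 (step_pair_flex hU hphy (RIso.refl _)
          (RIso.pair_swap (RIso.refl v₃) (RIso.refl v₁)) heq
          pa₁ pa₂ hv₃ hv₁ hb₁ hb₃)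
  -- ### case: S₁ split at the root, S₂ in the right half of T₂
  have casePR : ∀ a₁ a₂ T₂ : RTree L, (node a₁ a₂).IsPhylo →
      URel (node a₁ a₂) T₂ → Embeds a₁ (node B₁ B₂) → Embeds a₂ (node B₃ B₄) →
      Embeds T₂ (node C₂ C₄) → (node a₁ a₂).numLeaves ≤ max U (3 * R) := by
    intro a₁ a₂ T₂ hphy hU h1a h1b h2
    have hmem : ∀ x, x ∈ (node a₁ a₂).leafList ↔ x ∈ T₂.leafList :=
      fun x => hU.perm.mem_iff
    have ha₁2 : ∀ x ∈ a₁.leafList, x ∈ B₂.leafSet := by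
      intro x hx
      have hxT : x ∈ T₂.leafList := (hmem x).mp (by simp [hx])
      rcases memsplit h1a x hx with h | h
      · exfalso
        rcases memsplit h2 x hxT with h' | h'
        · exact d12 x h (c2b x h')
        · exact d14 x h (c4b x h')
      · exact h
    have ha₂4 : ∀ x ∈ a₂.leafList, x ∈ B₄.leafSet := by
      intro x hx
      have hxT : x ∈ T₂.leafList := (hmem x).mp (by simp [hx])
      rcases memsplit h1b x hx with h | h
      · exfalso
        rcases memsplit h2 x hxT with h' | h'
        · exact d23 x (c2b x h') h
        · exact d34 x h (c4b x h')
      · exact h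
    have pa₁ : Embeds a₁ B₂ :=
      prune_left h1a (fun x hx hB => d12 x hB (ha₁2 x hx))
    have pa₂ : Embeds a₂ B₄ :=
      prune_left h1b (fun x hx hB => d34 x hB (ha₂4 x hx))
    cases h2 with
    | left h2' =>
        exfalso
        obtain ⟨y, hy⟩ := exists_leaf a₂
        have hyT : y ∈ T₂.leafList := (hmem y).mp (by simp [hy])
        exact d24 y (c2b y (h2'.mem_leafList y hyT)) (ha₂4 y hy)
    | right h2' =>
        exfalso
        obtain ⟨y, hy⟩ := exists_leaf a₁
        have hyT : y ∈ T₂.leafList := (hmem y).mp (by simp [hy])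
        exact d24 y (ha₁2 y hy) (c4b y (h2'.mem_leafList y hyT))
    | @pair v₂ v₄ _ _ hv₂ hv₄ =>
        have heq : a₁.leafSet = v₂.leafSet :=
          parts_eq2 (Λ := B₂.leafSet) (M := B₄.leafSet) hmem
            (by intro x; simp) (by intro x; simp)
            ha₁2 ha₂4
            (fun x hx => c2b x (hv₂.mem_leafList x hx))
            (fun x hx => c4b x (hv₄.mem_leafList x hx)) d24
        exact fin2 (step_pair_flex hU hphy (RIso.refl _) (RIso.refl _) heq
          pa₁ pa₂ hv₂ hv₄ hb₂ hb₄)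
    | @pair_swap v₂ v₄ _ _ hv₂ hv₄ =>
        -- v₂ ⪯ C₄, v₄ ⪯ C₂
        have heq : a₁.leafSet = v₄.leafSet :=
          parts_eq2 (Λ := B₂.leafSet) (M := B₄.leafSet) hmem
            (by intro x; simp) (by intro x; simp; try tauto)
            ha₁2 ha₂4
            (fun x hx => c2b x (hv₄.mem_leafList x hx))
            (fun x hx => c4b x (hv₂.mem_leafList x hx)) d24
        exact fin2 (step_pair_flex hU hphy (RIso.refl _)
          (RIso.pair_swap (RIso.refl v₄) (RIso.refl v₂)) heq
          pa₁ pa₂ hv₄ hv₂ hb₂ hb₄)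

  -- ### case: both split at the root
  have casePP : ∀ a₁ a₂ b₁ b₂ : RTree L, (node a₁ a₂).IsPhylo →
      URel (node a₁ a₂) (node b₁ b₂) → Embeds a₁ (node B₁ B₂) →
      Embeds a₂ (node B₃ B₄) → Embeds b₁ (node C₁ C₃) → Embeds b₂ (node C₂ C₄) →
      (node a₁ a₂).numLeaves ≤ max U (3 * R) := by
    intro a₁ a₂ b₁ b₂ hphy hU h1a h1b h2a h2b
    have hmem : ∀ x, x ∈ (node a₁ a₂).leafList ↔ x ∈ (node b₁ b₂).leafList :=
      fun x => hU.perm.mem_iff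
    have lsplit : ∀ {P Q : RTree L} {y : L}, y ∈ (node P Q).leafList →
        y ∈ P.leafList ∨ y ∈ Q.leafList := fun h => List.mem_append.mp h
    cases h1a with
    | left ha₁ =>
      cases h1b with
      | left ha₂ =>
        -- parts Λ₁, Λ₃ : b₂ would be empty
        exfalso
        obtain ⟨y, hy⟩ := exists_leaf b₂
        have hyT : y ∈ (node a₁ a₂).leafList := (hmem y).mpr (by simp [hy])
        have hyQ : y ∈ B₁.leafSet ∨ y ∈ B₃.leafSet := by
          rcases lsplit hyT with h | h
          · exact Or.inl (ha₁.mem_leafList y h)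
          · exact Or.inr (ha₂.mem_leafList y h)
        rcases memsplit h2b y hy with h' | h'
        · rcases hyQ with h | h
          · exact d12 y h (c2b y h')
          · exact d23 y (c2b y h') h
        · rcases hyQ with h | h
          · exact d14 y h (c4b y h')
          · exact d34 y h (c4b y h')
      | right ha₂ =>
        -- parts Λ₁, Λ₄
        have qT : ∀ x ∈ (node a₁ a₂).leafList, x ∈ B₁.leafSet ∨ x ∈ B₄.leafSet := by
          intro x hx
          rcases lsplit hx with h | h
          · exact Or.inl (ha₁.mem_leafList x h)
          · exact Or.inr (ha₂.mem_leafList x h)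
        have tb₁ : ∀ x ∈ b₁.leafList, x ∈ B₁.leafSet := by
          intro x hx
          have hxT : x ∈ (node a₁ a₂).leafList := (hmem x).mpr (by simp [hx])
          rcases memsplit h2a x hx with h' | h'
          · exact c1b x h'
          · exfalso
            rcases qT x hxT with h | h
            · exact d13 x h (c3b x h')
            · exact d34 x (c3b x h') h
        have tb₂ : ∀ x ∈ b₂.leafList, x ∈ B₄.leafSet := by
          intro x hx
          have hxT : x ∈ (node a₁ a₂).leafList := (hmem x).mpr (by simp [hx])
          rcases memsplit h2b x hx with h' | h'
          · exfalso
            rcases qT x hxT with h | h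
            · exact d12 x h (c2b x h')
            · exact d24 x (c2b x h') h
          · exact c4b x h'
        have pb₁ : Embeds b₁ C₁ :=
          prune_right h2a (fun x hx hC => d13 x (tb₁ x hx) (c3b x hC))
        have pb₂ : Embeds b₂ C₄ :=
          prune_left h2b (fun x hx hC => d24 x (c2b x hC) (tb₂ x hx))
        have heq : a₁.leafSet = b₁.leafSet :=
          parts_eq2 (Λ := B₁.leafSet) (M := B₄.leafSet) hmem
            (by intro x; simp) (by intro x; simp)
            (fun x hx => ha₁.mem_leafList x hx) (fun x hx => ha₂.mem_leafList x hx)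
            tb₁ tb₂ d14
        exact fin2 (step_pair_flex hU hphy (RIso.refl _) (RIso.refl _) heq
          ha₁ ha₂ pb₁ pb₂ hb₁ hb₄)
      | @pair w₃ w₄ _ _ hw₃ hw₄ =>
        -- parts Λ₁, Λ₃, Λ₄
        have qT : ∀ x ∈ (node a₁ (node w₃ w₄)).leafList,
            x ∈ B₁.leafSet ∨ x ∈ B₃.leafSet ∨ x ∈ B₄.leafSet := by
          intro x hx
          have hx' : x ∈ a₁.leafList ∨ x ∈ w₃.leafList ∨ x ∈ w₄.leafList := by
            simpa using hx
          rcases hx' with h | h | h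
          · exact Or.inl (ha₁.mem_leafList x h)
          · exact Or.inr (Or.inl (hw₃.mem_leafList x h))
          · exact Or.inr (Or.inr (hw₄.mem_leafList x h))
        have tb₂ : ∀ x ∈ b₂.leafList, x ∈ B₄.leafSet := by
          intro x hx
          have hxT := (hmem x).mpr (show x ∈ (node b₁ b₂).leafList by simp [hx])
          rcases memsplit h2b x hx with h' | h'
          · exfalso
            rcases qT x hxT with h | h | h
            · exact d12 x h (c2b x h')
            · exact d23 x (c2b x h') h
            · exact d24 x (c2b x h') h
          · exact c4b x h'
        have pb₂ : Embeds b₂ C₄ :=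
          prune_left h2b (fun x hx hC => d24 x (c2b x hC) (tb₂ x hx))
        cases h2a with
        | left hbC =>
          exfalso
          obtain ⟨y, hy⟩ := exists_leaf w₃
          have hyQ : y ∈ B₃.leafSet := hw₃.mem_leafList y hy
          have hyT₂ : y ∈ (node b₁ b₂).leafList := (hmem y).mp (by simp [hy])
          rcases lsplit hyT₂ with h | h
          · exact d13 y (c1b y (hbC.mem_leafList y h)) hyQ
          · exact d34 y hyQ (tb₂ y h)
        | right hbC =>
          exfalso
          obtain ⟨y, hy⟩ := exists_leaf a₁
          have hyQ : y ∈ B₁.leafSet := ha₁.mem_leafList y hy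
          have hyT₂ : y ∈ (node b₁ b₂).leafList := (hmem y).mp (by simp [hy])
          rcases lsplit hyT₂ with h | h
          · exact d13 y hyQ (c3b y (hbC.mem_leafList y h))
          · exact d14 y hyQ (tb₂ y h)
        | @pair v₁ v₃ _ _ hv₁ hv₃ =>
          obtain ⟨e1, e2, e3⟩ :=
            parts_eq3 (Λ := B₁.leafSet) (M := B₃.leafSet) (N := B₄.leafSet) hmem
              (by intro x; simp; try tauto) (by intro x; simp; try tauto)
              (fun x hx => ha₁.mem_leafList x hx) (fun x hx => hw₃.mem_leafList x hx)
              (fun x hx => hw₄.mem_leafList x hx)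
              (fun x hx => c1b x (hv₁.mem_leafList x hx))
              (fun x hx => c3b x (hv₃.mem_leafList x hx)) tb₂ d13 d14 d34
          exact fin3 (step_tri_flex hU hphy
            (RIso.pair_swap (RIso.refl (node w₃ w₄)) (RIso.refl a₁))
            (RIso.pair (RIso.pair_swap (RIso.refl v₃) (RIso.refl v₁)) (RIso.refl b₂))
            e2 e3 e1 hw₃ hw₄ ha₁ hv₃ pb₂ hv₁ hb₃ hb₄ hb₁)
        | @pair_swap v₁ v₃ _ _ hv₁ hv₃ =>
          -- v₁ ⪯ C₃, v₃ ⪯ C₁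
          obtain ⟨e1, e2, e3⟩ :=
            parts_eq3 (Λ := B₁.leafSet) (M := B₃.leafSet) (N := B₄.leafSet) hmem
              (by intro x; simp; try tauto) (by intro x; simp; try tauto)
              (fun x hx => ha₁.mem_leafList x hx) (fun x hx => hw₃.mem_leafList x hx)
              (fun x hx => hw₄.mem_leafList x hx)
              (fun x hx => c1b x (hv₃.mem_leafList x hx))
              (fun x hx => c3b x (hv₁.mem_leafList x hx)) tb₂ d13 d14 d34
          exact fin3 (step_tri_flex hU hphy
            (RIso.pair_swap (RIso.refl (node w₃ w₄)) (RIso.refl a₁))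
            (RIso.refl _)
            e2 e3 e1 hw₃ hw₄ ha₁ hv₁ pb₂ hv₃ hb₃ hb₄ hb₁)
      | @pair_swap w₃ w₄ _ _ hw₃ hw₄ =>
        -- w₃ ⪯ B₄, w₄ ⪯ B₃ ; parts Λ₁, Λ₄, Λ₃
        have qT : ∀ x ∈ (node a₁ (node w₃ w₄)).leafList,
            x ∈ B₁.leafSet ∨ x ∈ B₃.leafSet ∨ x ∈ B₄.leafSet := by
          intro x hx
          have hx' : x ∈ a₁.leafList ∨ x ∈ w₃.leafList ∨ x ∈ w₄.leafList := by
            simpa using hx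
          rcases hx' with h | h | h
          · exact Or.inl (ha₁.mem_leafList x h)
          · exact Or.inr (Or.inr (hw₃.mem_leafList x h))
          · exact Or.inr (Or.inl (hw₄.mem_leafList x h))
        have tb₂ : ∀ x ∈ b₂.leafList, x ∈ B₄.leafSet := by
          intro x hx
          have hxT := (hmem x).mpr (show x ∈ (node b₁ b₂).leafList by simp [hx])
          rcases memsplit h2b x hx with h' | h'
          · exfalso
            rcases qT x hxT with h | h | h
            · exact d12 x h (c2b x h')
            · exact d23 x (c2b x h') h
            · exact d24 x (c2b x h') h
          · exact c4b x h'
        have pb₂ : Embeds b₂ C₄ :=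
          prune_left h2b (fun x hx hC => d24 x (c2b x hC) (tb₂ x hx))
        cases h2a with
        | left hbC =>
          exfalso
          obtain ⟨y, hy⟩ := exists_leaf w₄
          have hyQ : y ∈ B₃.leafSet := hw₄.mem_leafList y hy
          have hyT₂ : y ∈ (node b₁ b₂).leafList := (hmem y).mp (by simp [hy])
          rcases lsplit hyT₂ with h | h
          · exact d13 y (c1b y (hbC.mem_leafList y h)) hyQ
          · exact d34 y hyQ (tb₂ y h)
        | right hbC =>
          exfalso
          obtain ⟨y, hy⟩ := exists_leaf a₁
          have hyQ : y ∈ B₁.leafSet := ha₁.mem_leafList y hy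
          have hyT₂ : y ∈ (node b₁ b₂).leafList := (hmem y).mp (by simp [hy])
          rcases lsplit hyT₂ with h | h
          · exact d13 y hyQ (c3b y (hbC.mem_leafList y h))
          · exact d14 y hyQ (tb₂ y h)
        | @pair v₁ v₃ _ _ hv₁ hv₃ =>
          obtain ⟨e1, e2, e3⟩ :=
            parts_eq3 (Λ := B₁.leafSet) (M := B₃.leafSet) (N := B₄.leafSet) hmem
              (by intro x; simp; try tauto) (by intro x; simp; try tauto)
              (fun x hx => ha₁.mem_leafList x hx) (fun x hx => hw₄.mem_leafList x hx)
              (fun x hx => hw₃.mem_leafList x hx)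
              (fun x hx => c1b x (hv₁.mem_leafList x hx))
              (fun x hx => c3b x (hv₃.mem_leafList x hx)) tb₂ d13 d14 d34
          -- u = (a₁, w₄, w₃), v = (v₁, v₃, b₂)
          exact fin3 (step_tri_flex hU hphy
            (RIso.pair_swap (RIso.pair_swap (RIso.refl w₄) (RIso.refl w₃)) (RIso.refl a₁))
            (RIso.pair (RIso.pair_swap (RIso.refl v₃) (RIso.refl v₁)) (RIso.refl b₂))
            e2 e3 e1 hw₄ hw₃ ha₁ hv₃ pb₂ hv₁ hb₃ hb₄ hb₁)
        | @pair_swap v₁ v₃ _ _ hv₁ hv₃ =>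
          obtain ⟨e1, e2, e3⟩ :=
            parts_eq3 (Λ := B₁.leafSet) (M := B₃.leafSet) (N := B₄.leafSet) hmem
              (by intro x; simp; try tauto) (by intro x; simp; try tauto)
              (fun x hx => ha₁.mem_leafList x hx) (fun x hx => hw₄.mem_leafList x hx)
              (fun x hx => hw₃.mem_leafList x hx)
              (fun x hx => c1b x (hv₃.mem_leafList x hx))
              (fun x hx => c3b x (hv₁.mem_leafList x hx)) tb₂ d13 d14 d34
          exact fin3 (step_tri_flex hU hphy
            (RIso.pair_swap (RIso.pair_swap (RIso.refl w₄) (RIso.refl w₃)) (RIso.refl a₁))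
            (RIso.refl _)
            e2 e3 e1 hw₄ hw₃ ha₁ hv₁ pb₂ hv₃ hb₃ hb₄ hb₁)
    | right ha₁ =>
      cases h1b with
      | left ha₂ =>
        -- parts Λ₂, Λ₃
        have tb₁ : ∀ x ∈ b₁.leafList, x ∈ B₃.leafSet := by
          intro x hx
          have hxT : x ∈ (node a₁ a₂).leafList := (hmem x).mpr (by simp [hx])
          rcases memsplit h2a x hx with h' | h'
          · exfalso
            rcases lsplit hxT with h | h
            · exact d12 x (c1b x h') (ha₁.mem_leafList x h)
            · exact d13 x (c1b x h') (ha₂.mem_leafList x h)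
          · exact c3b x h'
        have tb₂ : ∀ x ∈ b₂.leafList, x ∈ B₂.leafSet := by
          intro x hx
          have hxT : x ∈ (node a₁ a₂).leafList := (hmem x).mpr (by simp [hx])
          rcases memsplit h2b x hx with h' | h'
          · exact c2b x h'
          · exfalso
            rcases lsplit hxT with h | h
            · exact d24 x (ha₁.mem_leafList x h) (c4b x h')
            · exact d34 x (ha₂.mem_leafList x h) (c4b x h')
        have pb₁ : Embeds b₁ C₃ :=
          prune_left h2a (fun x hx hC => d13 x (c1b x hC) (tb₁ x hx))
        have pb₂ : Embeds b₂ C₂ :=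
          prune_right h2b (fun x hx hC => d24 x (tb₂ x hx) (c4b x hC))
        have heq : a₁.leafSet = b₂.leafSet :=
          parts_eq2 (Λ := B₂.leafSet) (M := B₃.leafSet) hmem
            (by intro x; simp) (by intro x; simp; try tauto)
            (fun x hx => ha₁.mem_leafList x hx) (fun x hx => ha₂.mem_leafList x hx)
            tb₂ tb₁ d23
        exact fin2 (step_pair_flex hU hphy (RIso.refl _)
          (RIso.pair_swap (RIso.refl b₂) (RIso.refl b₁)) heq
          ha₁ ha₂ pb₂ pb₁ hb₂ hb₃)
      | right ha₂ =>
        -- parts Λ₂, Λ₄ : b₁ empty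
        exfalso
        obtain ⟨y, hy⟩ := exists_leaf b₁
        have hyT : y ∈ (node a₁ a₂).leafList := (hmem y).mpr (by simp [hy])
        have hyQ : y ∈ B₂.leafSet ∨ y ∈ B₄.leafSet := by
          rcases lsplit hyT with h | h
          · exact Or.inl (ha₁.mem_leafList y h)
          · exact Or.inr (ha₂.mem_leafList y h)
        rcases memsplit h2a y hy with h' | h'
        · rcases hyQ with h | h
          · exact d12 y (c1b y h') h
          · exact d14 y (c1b y h') h
        · rcases hyQ with h | h
          · exact d23 y h (c3b y h')
          · exact d34 y (c3b y h') h
      | @pair w₃ w₄ _ _ hw₃ hw₄ =>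
        -- parts Λ₂, Λ₃, Λ₄
        have qT : ∀ x ∈ (node a₁ (node w₃ w₄)).leafList,
            x ∈ B₂.leafSet ∨ x ∈ B₃.leafSet ∨ x ∈ B₄.leafSet := by
          intro x hx
          have hx' : x ∈ a₁.leafList ∨ x ∈ w₃.leafList ∨ x ∈ w₄.leafList := by
            simpa using hx
          rcases hx' with h | h | h
          · exact Or.inl (ha₁.mem_leafList x h)
          · exact Or.inr (Or.inl (hw₃.mem_leafList x h))
          · exact Or.inr (Or.inr (hw₄.mem_leafList x h))
        have tb₁ : ∀ x ∈ b₁.leafList, x ∈ B₃.leafSet := by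
          intro x hx
          have hxT := (hmem x).mpr (show x ∈ (node b₁ b₂).leafList by simp [hx])
          rcases memsplit h2a x hx with h' | h'
          · exfalso
            rcases qT x hxT with h | h | h
            · exact d12 x (c1b x h') h
            · exact d13 x (c1b x h') h
            · exact d14 x (c1b x h') h
          · exact c3b x h'
        have pb₁ : Embeds b₁ C₃ :=
          prune_left h2a (fun x hx hC => d13 x (c1b x hC) (tb₁ x hx))
        cases h2b with
        | left hbC =>
          exfalso
          obtain ⟨y, hy⟩ := exists_leaf w₄
          have hyQ : y ∈ B₄.leafSet := hw₄.mem_leafList y hy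
          have hyT₂ : y ∈ (node b₁ b₂).leafList := (hmem y).mp (by simp [hy])
          rcases lsplit hyT₂ with h | h
          · exact d34 y (tb₁ y h) hyQ
          · exact d24 y (c2b y (hbC.mem_leafList y h)) hyQ
        | right hbC =>
          exfalso
          obtain ⟨y, hy⟩ := exists_leaf a₁
          have hyQ : y ∈ B₂.leafSet := ha₁.mem_leafList y hy
          have hyT₂ : y ∈ (node b₁ b₂).leafList := (hmem y).mp (by simp [hy])
          rcases lsplit hyT₂ with h | h
          · exact d23 y hyQ (tb₁ y h)
          · exact d24 y hyQ (c4b y (hbC.mem_leafList y h))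
        | @pair v₂ v₄ _ _ hv₂ hv₄ =>
          obtain ⟨e1, e2, e3⟩ :=
            parts_eq3 (Λ := B₂.leafSet) (M := B₃.leafSet) (N := B₄.leafSet) hmem
              (by intro x; simp; try tauto) (by intro x; simp; try tauto)
              (fun x hx => ha₁.mem_leafList x hx) (fun x hx => hw₃.mem_leafList x hx)
              (fun x hx => hw₄.mem_leafList x hx)
              (fun x hx => c2b x (hv₂.mem_leafList x hx)) tb₁
              (fun x hx => c4b x (hv₄.mem_leafList x hx)) d23 d24 d34
          -- u = (a₁, w₃, w₄), v = (v₂, b₁, v₄)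
          exact fin3 (step_tri_flex hU hphy
            (RIso.pair_swap (RIso.pair_swap (RIso.refl w₄) (RIso.refl w₃)) (RIso.refl a₁))
            (RIso.pair_swap (RIso.pair_swap (RIso.refl v₄) (RIso.refl v₂)) (RIso.refl b₁))
            e3 e2 e1 hw₄ hw₃ ha₁ hv₄ pb₁ hv₂ hb₄ hb₃ hb₂)
        | @pair_swap v₂ v₄ _ _ hv₂ hv₄ =>
          -- v₂ ⪯ C₄, v₄ ⪯ C₂
          obtain ⟨e1, e2, e3⟩ :=
            parts_eq3 (Λ := B₂.leafSet) (M := B₃.leafSet) (N := B₄.leafSet) hmem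
              (by intro x; simp; try tauto) (by intro x; simp; try tauto)
              (fun x hx => ha₁.mem_leafList x hx) (fun x hx => hw₃.mem_leafList x hx)
              (fun x hx => hw₄.mem_leafList x hx)
              (fun x hx => c2b x (hv₄.mem_leafList x hx)) tb₁
              (fun x hx => c4b x (hv₂.mem_leafList x hx)) d23 d24 d34
          -- u = (a₁, w₃, w₄), v = (v₄, b₁, v₂)
          exact fin3 (step_tri_flex hU hphy
            (RIso.pair_swap (RIso.pair_swap (RIso.refl w₄) (RIso.refl w₃)) (RIso.refl a₁))
            (RIso.pair_swap (RIso.refl (node v₂ v₄)) (RIso.refl b₁))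
            e3 e2 e1 hw₄ hw₃ ha₁ hv₂ pb₁ hv₄ hb₄ hb₃ hb₂)
      | @pair_swap w₃ w₄ _ _ hw₃ hw₄ =>
        -- w₃ ⪯ B₄, w₄ ⪯ B₃ ; parts Λ₂, Λ₄, Λ₃
        have qT : ∀ x ∈ (node a₁ (node w₃ w₄)).leafList,
            x ∈ B₂.leafSet ∨ x ∈ B₃.leafSet ∨ x ∈ B₄.leafSet := by
          intro x hx
          have hx' : x ∈ a₁.leafList ∨ x ∈ w₃.leafList ∨ x ∈ w₄.leafList := by
            simpa using hx
          rcases hx' with h | h | h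
          · exact Or.inl (ha₁.mem_leafList x h)
          · exact Or.inr (Or.inr (hw₃.mem_leafList x h))
          · exact Or.inr (Or.inl (hw₄.mem_leafList x h))
        have tb₁ : ∀ x ∈ b₁.leafList, x ∈ B₃.leafSet := by
          intro x hx
          have hxT := (hmem x).mpr (show x ∈ (node b₁ b₂).leafList by simp [hx])
          rcases memsplit h2a x hx with h' | h'
          · exfalso
            rcases qT x hxT with h | h | h
            · exact d12 x (c1b x h') h
            · exact d13 x (c1b x h') h
            · exact d14 x (c1b x h') h
          · exact c3b x h'
        have pb₁ : Embeds b₁ C₃ :=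
          prune_left h2a (fun x hx hC => d13 x (c1b x hC) (tb₁ x hx))
        cases h2b with
        | left hbC =>
          exfalso
          obtain ⟨y, hy⟩ := exists_leaf w₃
          have hyQ : y ∈ B₄.leafSet := hw₃.mem_leafList y hy
          have hyT₂ : y ∈ (node b₁ b₂).leafList := (hmem y).mp (by simp [hy])
          rcases lsplit hyT₂ with h | h
          · exact d34 y (tb₁ y h) hyQ
          · exact d24 y (c2b y (hbC.mem_leafList y h)) hyQ
        | right hbC =>
          exfalso
          obtain ⟨y, hy⟩ := exists_leaf a₁
          have hyQ : y ∈ B₂.leafSet := ha₁.mem_leafList y hy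
          have hyT₂ : y ∈ (node b₁ b₂).leafList := (hmem y).mp (by simp [hy])
          rcases lsplit hyT₂ with h | h
          · exact d23 y hyQ (tb₁ y h)
          · exact d24 y hyQ (c4b y (hbC.mem_leafList y h))
        | @pair v₂ v₄ _ _ hv₂ hv₄ =>
          obtain ⟨e1, e2, e3⟩ :=
            parts_eq3 (Λ := B₂.leafSet) (M := B₃.leafSet) (N := B₄.leafSet) hmem
              (by intro x; simp; try tauto) (by intro x; simp; try tauto)
              (fun x hx => ha₁.mem_leafList x hx) (fun x hx => hw₄.mem_leafList x hx)
              (fun x hx => hw₃.mem_leafList x hx)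
              (fun x hx => c2b x (hv₂.mem_leafList x hx)) tb₁
              (fun x hx => c4b x (hv₄.mem_leafList x hx)) d23 d24 d34
          -- u = (a₁, w₄, w₃), v = (v₂, b₁, v₄)
          exact fin3 (step_tri_flex hU hphy
            (RIso.pair_swap (RIso.refl (node w₃ w₄)) (RIso.refl a₁))
            (RIso.pair_swap (RIso.pair_swap (RIso.refl v₄) (RIso.refl v₂)) (RIso.refl b₁))
            e3 e2 e1 hw₃ hw₄ ha₁ hv₄ pb₁ hv₂ hb₄ hb₃ hb₂)
        | @pair_swap v₂ v₄ _ _ hv₂ hv₄ =>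
          obtain ⟨e1, e2, e3⟩ :=
            parts_eq3 (Λ := B₂.leafSet) (M := B₃.leafSet) (N := B₄.leafSet) hmem
              (by intro x; simp; try tauto) (by intro x; simp; try tauto)
              (fun x hx => ha₁.mem_leafList x hx) (fun x hx => hw₄.mem_leafList x hx)
              (fun x hx => hw₃.mem_leafList x hx)
              (fun x hx => c2b x (hv₄.mem_leafList x hx)) tb₁
              (fun x hx => c4b x (hv₂.mem_leafList x hx)) d23 d24 d34
          exact fin3 (step_tri_flex hU hphy
            (RIso.pair_swap (RIso.refl (node w₃ w₄)) (RIso.refl a₁))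
            (RIso.pair_swap (RIso.refl (node v₂ v₄)) (RIso.refl b₁))
            e3 e2 e1 hw₃ hw₄ ha₁ hv₂ pb₁ hv₄ hb₄ hb₃ hb₂)
    | @pair w₁ w₂ _ _ hw₁ hw₂ =>
      cases h1b with
      | left ha₂ =>
        -- parts Λ₁, Λ₂, Λ₃
        have qT : ∀ x ∈ (node (node w₁ w₂) a₂).leafList,
            x ∈ B₁.leafSet ∨ x ∈ B₂.leafSet ∨ x ∈ B₃.leafSet := by
          intro x hx
          have hx' : x ∈ w₁.leafList ∨ x ∈ w₂.leafList ∨ x ∈ a₂.leafList := by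
            simpa using hx
          rcases hx' with h | h | h
          · exact Or.inl (hw₁.mem_leafList x h)
          · exact Or.inr (Or.inl (hw₂.mem_leafList x h))
          · exact Or.inr (Or.inr (ha₂.mem_leafList x h))
        have tb₂ : ∀ x ∈ b₂.leafList, x ∈ B₂.leafSet := by
          intro x hx
          have hxT := (hmem x).mpr (show x ∈ (node b₁ b₂).leafList by simp [hx])
          rcases memsplit h2b x hx with h' | h'
          · exact c2b x h'
          · exfalso
            rcases qT x hxT with h | h | h
            · exact d14 x h (c4b x h')
            · exact d24 x h (c4b x h')
            · exact d34 x h (c4b x h')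
        have pb₂ : Embeds b₂ C₂ :=
          prune_right h2b (fun x hx hC => d24 x (tb₂ x hx) (c4b x hC))
        cases h2a with
        | left hbC =>
          exfalso
          obtain ⟨y, hy⟩ := exists_leaf a₂
          have hyQ : y ∈ B₃.leafSet := ha₂.mem_leafList y hy
          have hyT₂ : y ∈ (node b₁ b₂).leafList := (hmem y).mp (by simp [hy])
          rcases lsplit hyT₂ with h | h
          · exact d13 y (c1b y (hbC.mem_leafList y h)) hyQ
          · exact d23 y (tb₂ y h) hyQ
        | right hbC =>
          exfalso
          obtain ⟨y, hy⟩ := exists_leaf w₁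
          have hyQ : y ∈ B₁.leafSet := hw₁.mem_leafList y hy
          have hyT₂ : y ∈ (node b₁ b₂).leafList := (hmem y).mp (by simp [hy])
          rcases lsplit hyT₂ with h | h
          · exact d13 y hyQ (c3b y (hbC.mem_leafList y h))
          · exact d12 y hyQ (tb₂ y h)
        | @pair v₁ v₃ _ _ hv₁ hv₃ =>
          obtain ⟨e1, e2, e3⟩ :=
            parts_eq3 (Λ := B₁.leafSet) (M := B₂.leafSet) (N := B₃.leafSet) hmem
              (by intro x; simp; try tauto) (by intro x; simp; try tauto)
              (fun x hx => hw₁.mem_leafList x hx) (fun x hx => hw₂.mem_leafList x hx)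
              (fun x hx => ha₂.mem_leafList x hx)
              (fun x hx => c1b x (hv₁.mem_leafList x hx)) tb₂
              (fun x hx => c3b x (hv₃.mem_leafList x hx)) d12 d13 d23
          -- u = (w₁, w₂, a₂), v = (v₁, b₂, v₃)
          exact fin3 (step_tri_flex hU hphy (RIso.refl _) (RIso.refl _)
            e1 e2 e3 hw₁ hw₂ ha₂ hv₁ pb₂ hv₃ hb₁ hb₂ hb₃)
        | @pair_swap v₁ v₃ _ _ hv₁ hv₃ =>
          -- v₁ ⪯ C₃, v₃ ⪯ C₁
          obtain ⟨e1, e2, e3⟩ :=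
            parts_eq3 (Λ := B₁.leafSet) (M := B₂.leafSet) (N := B₃.leafSet) hmem
              (by intro x; simp; try tauto) (by intro x; simp; try tauto)
              (fun x hx => hw₁.mem_leafList x hx) (fun x hx => hw₂.mem_leafList x hx)
              (fun x hx => ha₂.mem_leafList x hx)
              (fun x hx => c1b x (hv₃.mem_leafList x hx)) tb₂
              (fun x hx => c3b x (hv₁.mem_leafList x hx)) d12 d13 d23
          -- u = (w₁, w₂, a₂), v = (v₃, b₂, v₁)
          exact fin3 (step_tri_flex hU hphy (RIso.refl _)
            (RIso.pair (RIso.pair_swap (RIso.refl v₃) (RIso.refl v₁)) (RIso.refl b₂))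
            e1 e2 e3 hw₁ hw₂ ha₂ hv₃ pb₂ hv₁ hb₁ hb₂ hb₃)
      | right ha₂ =>
        -- parts Λ₁, Λ₂, Λ₄
        have qT : ∀ x ∈ (node (node w₁ w₂) a₂).leafList,
            x ∈ B₁.leafSet ∨ x ∈ B₂.leafSet ∨ x ∈ B₄.leafSet := by
          intro x hx
          have hx' : x ∈ w₁.leafList ∨ x ∈ w₂.leafList ∨ x ∈ a₂.leafList := by
            simpa using hx
          rcases hx' with h | h | h
          · exact Or.inl (hw₁.mem_leafList x h)
          · exact Or.inr (Or.inl (hw₂.mem_leafList x h))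
          · exact Or.inr (Or.inr (ha₂.mem_leafList x h))
        have tb₁ : ∀ x ∈ b₁.leafList, x ∈ B₁.leafSet := by
          intro x hx
          have hxT := (hmem x).mpr (show x ∈ (node b₁ b₂).leafList by simp [hx])
          rcases memsplit h2a x hx with h' | h'
          · exact c1b x h'
          · exfalso
            rcases qT x hxT with h | h | h
            · exact d13 x h (c3b x h')
            · exact d23 x h (c3b x h')
            · exact d34 x (c3b x h') h
        have pb₁ : Embeds b₁ C₁ :=
          prune_right h2a (fun x hx hC => d13 x (tb₁ x hx) (c3b x hC))
        cases h2b with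
        | left hbC =>
          exfalso
          obtain ⟨y, hy⟩ := exists_leaf a₂
          have hyQ : y ∈ B₄.leafSet := ha₂.mem_leafList y hy
          have hyT₂ : y ∈ (node b₁ b₂).leafList := (hmem y).mp (by simp [hy])
          rcases lsplit hyT₂ with h | h
          · exact d14 y (tb₁ y h) hyQ
          · exact d24 y (c2b y (hbC.mem_leafList y h)) hyQ
        | right hbC =>
          exfalso
          obtain ⟨y, hy⟩ := exists_leaf w₂
          have hyQ : y ∈ B₂.leafSet := hw₂.mem_leafList y hy
          have hyT₂ : y ∈ (node b₁ b₂).leafList := (hmem y).mp (by simp [hy])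
          rcases lsplit hyT₂ with h | h
          · exact d12 y (tb₁ y h) hyQ
          · exact d24 y hyQ (c4b y (hbC.mem_leafList y h))
        | @pair v₂ v₄ _ _ hv₂ hv₄ =>
          obtain ⟨e1, e2, e3⟩ :=
            parts_eq3 (Λ := B₁.leafSet) (M := B₂.leafSet) (N := B₄.leafSet) hmem
              (by intro x; simp; try tauto) (by intro x; simp; try tauto)
              (fun x hx => hw₁.mem_leafList x hx) (fun x hx => hw₂.mem_leafList x hx)
              (fun x hx => ha₂.mem_leafList x hx) tb₁
              (fun x hx => c2b x (hv₂.mem_leafList x hx))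
              (fun x hx => c4b x (hv₄.mem_leafList x hx)) d12 d14 d24
          -- u = (w₁, w₂, a₂), v = (b₁, v₂, v₄)
          exact fin3 (step_tri_flex hU hphy
            (RIso.pair (RIso.pair_swap (RIso.refl w₂) (RIso.refl w₁)) (RIso.refl a₂))
            (RIso.pair_swap (RIso.refl (node v₂ v₄)) (RIso.refl b₁))
            e2 e1 e3 hw₂ hw₁ ha₂ hv₂ pb₁ hv₄ hb₂ hb₁ hb₄)
        | @pair_swap v₂ v₄ _ _ hv₂ hv₄ =>
          -- v₂ ⪯ C₄, v₄ ⪯ C₂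
          obtain ⟨e1, e2, e3⟩ :=
            parts_eq3 (Λ := B₁.leafSet) (M := B₂.leafSet) (N := B₄.leafSet) hmem
              (by intro x; simp; try tauto) (by intro x; simp; try tauto)
              (fun x hx => hw₁.mem_leafList x hx) (fun x hx => hw₂.mem_leafList x hx)
              (fun x hx => ha₂.mem_leafList x hx) tb₁
              (fun x hx => c2b x (hv₄.mem_leafList x hx))
              (fun x hx => c4b x (hv₂.mem_leafList x hx)) d12 d14 d24
          -- u = (w₁, w₂, a₂), v = (b₁, v₄, v₂)
          exact fin3 (step_tri_flex hU hphy
            (RIso.pair (RIso.pair_swap (RIso.refl w₂) (RIso.refl w₁)) (RIso.refl a₂))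
            (RIso.pair_swap (RIso.pair_swap (RIso.refl v₄) (RIso.refl v₂)) (RIso.refl b₁))
            e2 e1 e3 hw₂ hw₁ ha₂ hv₄ pb₁ hv₂ hb₂ hb₁ hb₄)
      | @pair w₃ w₄ _ _ hw₃ hw₄ =>
        exfalso
        exact step_4contra_flex hU hphy (RIso.refl _) (RIso.refl _)
          (fun x hx => hw₁.mem_leafList x hx) (fun x hx => hw₂.mem_leafList x hx)
          (fun x hx => hw₃.mem_leafList x hx) (fun x hx => hw₄.mem_leafList x hx)
          (fun x hx => by
            rcases memsplit h2a x hx with h | h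
            · exact Or.inl (c1b x h)
            · exact Or.inr (c3b x h))
          (fun x hx => by
            rcases memsplit h2b x hx with h | h
            · exact Or.inl (c2b x h)
            · exact Or.inr (c4b x h))
          d12 d13 d14 d23 d24 d34
      | @pair_swap w₃ w₄ _ _ hw₃ hw₄ =>
        exfalso
        exact step_4contra_flex hU hphy
          (RIso.pair (RIso.refl (node w₁ w₂))
            (RIso.pair_swap (RIso.refl w₄) (RIso.refl w₃)))
          (RIso.refl _)
          (fun x hx => hw₁.mem_leafList x hx) (fun x hx => hw₂.mem_leafList x hx)
          (fun x hx => hw₄.mem_leafList x hx) (fun x hx => hw₃.mem_leafList x hx)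
          (fun x hx => by
            rcases memsplit h2a x hx with h | h
            · exact Or.inl (c1b x h)
            · exact Or.inr (c3b x h))
          (fun x hx => by
            rcases memsplit h2b x hx with h | h
            · exact Or.inl (c2b x h)
            · exact Or.inr (c4b x h))
          d12 d13 d14 d23 d24 d34
    | @pair_swap w₁ w₂ _ _ hw₁ hw₂ =>
      -- w₁ ⪯ B₂, w₂ ⪯ B₁
      cases h1b with
      | left ha₂ =>
        -- parts Λ₂(w₁), Λ₁(w₂), Λ₃(a₂)
        have qT : ∀ x ∈ (node (node w₁ w₂) a₂).leafList,
            x ∈ B₁.leafSet ∨ x ∈ B₂.leafSet ∨ x ∈ B₃.leafSet := by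
          intro x hx
          have hx' : x ∈ w₁.leafList ∨ x ∈ w₂.leafList ∨ x ∈ a₂.leafList := by
            simpa using hx
          rcases hx' with h | h | h
          · exact Or.inr (Or.inl (hw₁.mem_leafList x h))
          · exact Or.inl (hw₂.mem_leafList x h)
          · exact Or.inr (Or.inr (ha₂.mem_leafList x h))
        have tb₂ : ∀ x ∈ b₂.leafList, x ∈ B₂.leafSet := by
          intro x hx
          have hxT := (hmem x).mpr (show x ∈ (node b₁ b₂).leafList by simp [hx])
          rcases memsplit h2b x hx with h' | h'
          · exact c2b x h'
          · exfalso
            rcases qT x hxT with h | h | h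
            · exact d14 x h (c4b x h')
            · exact d24 x h (c4b x h')
            · exact d34 x h (c4b x h')
        have pb₂ : Embeds b₂ C₂ :=
          prune_right h2b (fun x hx hC => d24 x (tb₂ x hx) (c4b x hC))
        cases h2a with
        | left hbC =>
          exfalso
          obtain ⟨y, hy⟩ := exists_leaf a₂
          have hyQ : y ∈ B₃.leafSet := ha₂.mem_leafList y hy
          have hyT₂ : y ∈ (node b₁ b₂).leafList := (hmem y).mp (by simp [hy])
          rcases lsplit hyT₂ with h | h
          · exact d13 y (c1b y (hbC.mem_leafList y h)) hyQ
          · exact d23 y (tb₂ y h) hyQ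
        | right hbC =>
          exfalso
          obtain ⟨y, hy⟩ := exists_leaf w₂
          have hyQ : y ∈ B₁.leafSet := hw₂.mem_leafList y hy
          have hyT₂ : y ∈ (node b₁ b₂).leafList := (hmem y).mp (by simp [hy])
          rcases lsplit hyT₂ with h | h
          · exact d13 y hyQ (c3b y (hbC.mem_leafList y h))
          · exact d12 y hyQ (tb₂ y h)
        | @pair v₁ v₃ _ _ hv₁ hv₃ =>
          obtain ⟨e1, e2, e3⟩ :=
            parts_eq3 (Λ := B₁.leafSet) (M := B₂.leafSet) (N := B₃.leafSet) hmem
              (by intro x; simp; try tauto) (by intro x; simp; try tauto)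
              (fun x hx => hw₂.mem_leafList x hx) (fun x hx => hw₁.mem_leafList x hx)
              (fun x hx => ha₂.mem_leafList x hx)
              (fun x hx => c1b x (hv₁.mem_leafList x hx)) tb₂
              (fun x hx => c3b x (hv₃.mem_leafList x hx)) d12 d13 d23
          -- u = (w₂, w₁, a₂), v = (v₁, b₂, v₃)
          exact fin3 (step_tri_flex hU hphy
            (RIso.pair (RIso.pair_swap (RIso.refl w₂) (RIso.refl w₁)) (RIso.refl a₂))
            (RIso.refl _)
            e1 e2 e3 hw₂ hw₁ ha₂ hv₁ pb₂ hv₃ hb₁ hb₂ hb₃)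
        | @pair_swap v₁ v₃ _ _ hv₁ hv₃ =>
          obtain ⟨e1, e2, e3⟩ :=
            parts_eq3 (Λ := B₁.leafSet) (M := B₂.leafSet) (N := B₃.leafSet) hmem
              (by intro x; simp; try tauto) (by intro x; simp; try tauto)
              (fun x hx => hw₂.mem_leafList x hx) (fun x hx => hw₁.mem_leafList x hx)
              (fun x hx => ha₂.mem_leafList x hx)
              (fun x hx => c1b x (hv₃.mem_leafList x hx)) tb₂
              (fun x hx => c3b x (hv₁.mem_leafList x hx)) d12 d13 d23
          exact fin3 (step_tri_flex hU hphy
            (RIso.pair (RIso.pair_swap (RIso.refl w₂) (RIso.refl w₁)) (RIso.refl a₂))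
            (RIso.pair (RIso.pair_swap (RIso.refl v₃) (RIso.refl v₁)) (RIso.refl b₂))
            e1 e2 e3 hw₂ hw₁ ha₂ hv₃ pb₂ hv₁ hb₁ hb₂ hb₃)
      | right ha₂ =>
        -- parts Λ₂(w₁), Λ₁(w₂), Λ₄(a₂)
        have qT : ∀ x ∈ (node (node w₁ w₂) a₂).leafList,
            x ∈ B₁.leafSet ∨ x ∈ B₂.leafSet ∨ x ∈ B₄.leafSet := by
          intro x hx
          have hx' : x ∈ w₁.leafList ∨ x ∈ w₂.leafList ∨ x ∈ a₂.leafList := by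
            simpa using hx
          rcases hx' with h | h | h
          · exact Or.inr (Or.inl (hw₁.mem_leafList x h))
          · exact Or.inl (hw₂.mem_leafList x h)
          · exact Or.inr (Or.inr (ha₂.mem_leafList x h))
        have tb₁ : ∀ x ∈ b₁.leafList, x ∈ B₁.leafSet := by
          intro x hx
          have hxT := (hmem x).mpr (show x ∈ (node b₁ b₂).leafList by simp [hx])
          rcases memsplit h2a x hx with h' | h'
          · exact c1b x h'
          · exfalso
            rcases qT x hxT with h | h | h
            · exact d13 x h (c3b x h')
            · exact d23 x h (c3b x h')
            · exact d34 x (c3b x h') h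
        have pb₁ : Embeds b₁ C₁ :=
          prune_right h2a (fun x hx hC => d13 x (tb₁ x hx) (c3b x hC))
        cases h2b with
        | left hbC =>
          exfalso
          obtain ⟨y, hy⟩ := exists_leaf a₂
          have hyQ : y ∈ B₄.leafSet := ha₂.mem_leafList y hy
          have hyT₂ : y ∈ (node b₁ b₂).leafList := (hmem y).mp (by simp [hy])
          rcases lsplit hyT₂ with h | h
          · exact d14 y (tb₁ y h) hyQ
          · exact d24 y (c2b y (hbC.mem_leafList y h)) hyQ
        | right hbC =>
          exfalso
          obtain ⟨y, hy⟩ := exists_leaf w₁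
          have hyQ : y ∈ B₂.leafSet := hw₁.mem_leafList y hy
          have hyT₂ : y ∈ (node b₁ b₂).leafList := (hmem y).mp (by simp [hy])
          rcases lsplit hyT₂ with h | h
          · exact d12 y (tb₁ y h) hyQ
          · exact d24 y hyQ (c4b y (hbC.mem_leafList y h))
        | @pair v₂ v₄ _ _ hv₂ hv₄ =>
          obtain ⟨e1, e2, e3⟩ :=
            parts_eq3 (Λ := B₂.leafSet) (M := B₁.leafSet) (N := B₄.leafSet) hmem
              (by intro x; simp; try tauto) (by intro x; simp; try tauto)
              (fun x hx => hw₁.mem_leafList x hx) (fun x hx => hw₂.mem_leafList x hx)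
              (fun x hx => ha₂.mem_leafList x hx)
              (fun x hx => c2b x (hv₂.mem_leafList x hx)) tb₁
              (fun x hx => c4b x (hv₄.mem_leafList x hx))
              (fun x hx h => d12 x h hx) d24 d14
          -- u = (w₁, w₂, a₂), v = (v₂, b₁, v₄)
          exact fin3 (step_tri_flex hU hphy (RIso.refl _)
            (RIso.pair_swap (RIso.refl (node v₂ v₄)) (RIso.refl b₁))
            e1 e2 e3 hw₁ hw₂ ha₂ hv₂ pb₁ hv₄ hb₂ hb₁ hb₄)
        | @pair_swap v₂ v₄ _ _ hv₂ hv₄ =>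
          -- v₂ ⪯ C₄, v₄ ⪯ C₂
          obtain ⟨e1, e2, e3⟩ :=
            parts_eq3 (Λ := B₂.leafSet) (M := B₁.leafSet) (N := B₄.leafSet) hmem
              (by intro x; simp; try tauto) (by intro x; simp; try tauto)
              (fun x hx => hw₁.mem_leafList x hx) (fun x hx => hw₂.mem_leafList x hx)
              (fun x hx => ha₂.mem_leafList x hx)
              (fun x hx => c2b x (hv₄.mem_leafList x hx)) tb₁
              (fun x hx => c4b x (hv₂.mem_leafList x hx))
              (fun x hx h => d12 x h hx) d24 d14
          -- u = (w₁, w₂, a₂), v = (v₄, b₁, v₂)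
          exact fin3 (step_tri_flex hU hphy (RIso.refl _)
            (RIso.pair_swap (RIso.pair_swap (RIso.refl v₄) (RIso.refl v₂)) (RIso.refl b₁))
            e1 e2 e3 hw₁ hw₂ ha₂ hv₄ pb₁ hv₂ hb₂ hb₁ hb₄)
      | @pair w₃ w₄ _ _ hw₃ hw₄ =>
        exfalso
        exact step_4contra_flex hU hphy
          (RIso.pair (RIso.pair_swap (RIso.refl w₂) (RIso.refl w₁))
            (RIso.refl (node w₃ w₄)))
          (RIso.refl _)
          (fun x hx => hw₂.mem_leafList x hx) (fun x hx => hw₁.mem_leafList x hx)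
          (fun x hx => hw₃.mem_leafList x hx) (fun x hx => hw₄.mem_leafList x hx)
          (fun x hx => by
            rcases memsplit h2a x hx with h | h
            · exact Or.inl (c1b x h)
            · exact Or.inr (c3b x h))
          (fun x hx => by
            rcases memsplit h2b x hx with h | h
            · exact Or.inl (c2b x h)
            · exact Or.inr (c4b x h))
          d12 d13 d14 d23 d24 d34
      | @pair_swap w₃ w₄ _ _ hw₃ hw₄ =>
        exfalso
        exact step_4contra_flex hU hphy
          (RIso.pair (RIso.pair_swap (RIso.refl w₂) (RIso.refl w₁))
            (RIso.pair_swap (RIso.refl w₄) (RIso.refl w₃)))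
          (RIso.refl _)
          (fun x hx => hw₂.mem_leafList x hx) (fun x hx => hw₁.mem_leafList x hx)
          (fun x hx => hw₄.mem_leafList x hx) (fun x hx => hw₃.mem_leafList x hx)
          (fun x hx => by
            rcases memsplit h2a x hx with h | h
            · exact Or.inl (c1b x h)
            · exact Or.inr (c3b x h))
          (fun x hx => by
            rcases memsplit h2b x hx with h | h
            · exact Or.inl (c2b x h)
            · exact Or.inr (c4b x h))
          d12 d13 d14 d23 d24 d34
  -- ### top level
  intro S₁ S₂ hphy hUr hE1 hE2
  have hmemEq : ∀ x, x ∈ S₁.leafList ↔ x ∈ S₂.leafList := fun x => hUr.perm.mem_iff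
  cases hE1 with
  | left h1 =>
    cases hE2 with
    | left h2 =>
      have m1 : ∀ x ∈ S₁.leafList, x ∈ B₁.leafSet := by
        intro x hx
        rcases memsplit h1 x hx with h | h
        · exact h
        · exfalso
          rcases memsplit h2 x ((hmemEq x).mp hx) with h' | h'
          · exact d12 x (c1b x h') h
          · exact d23 x h (c3b x h')
      exact finU (hu₁ S₁ S₂ hphy hUr
        (prune_right h1 (fun x hx hB => d12 x (m1 x hx) hB))
        (prune_right h2 (fun x hx hC =>
          d13 x (m1 x ((hmemEq x).mpr hx)) (c3b x hC))))
    | right h2 =>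
      have m2 : ∀ x ∈ S₁.leafList, x ∈ B₂.leafSet := by
        intro x hx
        rcases memsplit h1 x hx with h | h
        · exfalso
          rcases memsplit h2 x ((hmemEq x).mp hx) with h' | h'
          · exact d12 x h (c2b x h')
          · exact d14 x h (c4b x h')
        · exact h
      exact finU (hu₂ S₁ S₂ hphy hUr
        (prune_left h1 (fun x hx hB => d12 x hB (m2 x hx)))
        (prune_right h2 (fun x hx hC =>
          d24 x (m2 x ((hmemEq x).mpr hx)) (c4b x hC))))
    | @pair b₁ b₂ _ _ h2a h2b => exact caseLP S₁ b₁ b₂ hphy hUr h1 h2a h2b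
    | @pair_swap b₁ b₂ _ _ h2a h2b =>
      exact caseLP S₁ b₂ b₁ hphy
        (urel_trans hUr (urel_of_riso (RIso.pair_swap (RIso.refl b₁) (RIso.refl b₂))))
        h1 h2b h2a
  | right h1 =>
    cases hE2 with
    | left h2 =>
      have m3 : ∀ x ∈ S₁.leafList, x ∈ B₃.leafSet := by
        intro x hx
        rcases memsplit h1 x hx with h | h
        · exact h
        · exfalso
          rcases memsplit h2 x ((hmemEq x).mp hx) with h' | h'
          · exact d14 x (c1b x h') h
          · exact d34 x (c3b x h') h
      exact finU (hu₃ S₁ S₂ hphy hUr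
        (prune_right h1 (fun x hx hB => d34 x (m3 x hx) hB))
        (prune_left h2 (fun x hx hC =>
          d13 x (c1b x hC) (m3 x ((hmemEq x).mpr hx)))))
    | right h2 =>
      have m4 : ∀ x ∈ S₁.leafList, x ∈ B₄.leafSet := by
        intro x hx
        rcases memsplit h1 x hx with h | h
        · exfalso
          rcases memsplit h2 x ((hmemEq x).mp hx) with h' | h'
          · exact d23 x (c2b x h') h
          · exact d34 x h (c4b x h')
        · exact h
      exact finU (hu₄ S₁ S₂ hphy hUr
        (prune_left h1 (fun x hx hB => d34 x hB (m4 x hx)))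
        (prune_left h2 (fun x hx hC =>
          d24 x (c2b x hC) (m4 x ((hmemEq x).mpr hx)))))
    | @pair b₁ b₂ _ _ h2a h2b => exact caseRP S₁ b₁ b₂ hphy hUr h1 h2a h2b
    | @pair_swap b₁ b₂ _ _ h2a h2b =>
      exact caseRP S₁ b₂ b₁ hphy
        (urel_trans hUr (urel_of_riso (RIso.pair_swap (RIso.refl b₁) (RIso.refl b₂))))
        h1 h2b h2a
  | @pair a₁ a₂ _ _ h1a h1b =>
    cases hE2 with
    | left h2 => exact casePL a₁ a₂ S₂ hphy hUr h1a h1b h2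
    | right h2 => exact casePR a₁ a₂ S₂ hphy hUr h1a h1b h2
    | @pair b₁ b₂ _ _ h2a h2b => exact casePP a₁ a₂ b₁ b₂ hphy hUr h1a h1b h2a h2b
    | @pair_swap b₁ b₂ _ _ h2a h2b =>
      exact casePP a₁ a₂ b₂ b₁ hphy
        (urel_trans hUr (urel_of_riso (RIso.pair_swap (RIso.refl b₁) (RIso.refl b₂))))
        h1a h1b h2b h2a
  | @pair_swap a₁ a₂ _ _ h1a h1b =>
    -- a₁ ⪯ node B₃ B₄, a₂ ⪯ node B₁ B₂
    have hiso : RIso (node a₂ a₁) (node a₁ a₂) :=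
      RIso.pair_swap (RIso.refl a₂) (RIso.refl a₁)
    have hphy' : (node a₂ a₁).IsPhylo := riso_isPhylo hiso hphy
    have hU' : URel (node a₂ a₁) S₂ := urel_trans (urel_of_riso hiso) hUr
    have hnum : (node a₂ a₁).numLeaves = (node a₁ a₂).numLeaves := riso_numLeaves hiso
    rw [← hnum]
    cases hE2 with
    | left h2 => exact casePL a₂ a₁ S₂ hphy' hU' h1b h1a h2
    | right h2 => exact casePR a₂ a₁ S₂ hphy' hU' h1b h1a h2
    | @pair b₁ b₂ _ _ h2a h2b => exact casePP a₂ a₁ b₁ b₂ hphy' hU' h1b h1a h2a h2b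
    | @pair_swap b₁ b₂ _ _ h2a h2b =>
      exact casePP a₂ a₁ b₂ b₁ hphy'
        (urel_trans hU' (urel_of_riso (RIso.pair_swap (RIso.refl b₁) (RIso.refl b₂))))
        h1b h1a h2b h2a

end RTree
namespace RTree

theorem mem_range1 {x s n : ℕ} : x ∈ List.range' s n ↔ s ≤ x ∧ x < s + n := by
  rw [List.mem_range']
  constructor
  · rintro ⟨i, hi, rfl⟩; omega
  · intro ⟨h1, h2⟩; exact ⟨x - s, by omega, by omega⟩

theorem length_swapList : ∀ (i : ℕ) (S : List ℕ), (swapList i S).length = S.length := by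
  intro i
  induction i with
  | zero => intro S; rfl
  | succ i ih =>
      intro S
      have h1 : (S.take (4 ^ i)).length + (S.drop (4 ^ i)).length = S.length := by
        rw [← List.length_append, List.take_append_drop]
      have h2 : ((S.drop (4 ^ i)).take (4 ^ i)).length +
          ((S.drop (4 ^ i)).drop (4 ^ i)).length = (S.drop (4 ^ i)).length := by
        rw [← List.length_append, List.take_append_drop]
      have h3 : (((S.drop (4 ^ i)).drop (4 ^ i)).take (4 ^ i)).length +
          (((S.drop (4 ^ i)).drop (4 ^ i)).drop (4 ^ i)).length =
          ((S.drop (4 ^ i)).drop (4 ^ i)).length := by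
        rw [← List.length_append, List.take_append_drop]
      simp only [swapList, List.length_append, ih]
      omega

theorem mem_swapList : ∀ (i : ℕ) (S : List ℕ) (x : ℕ), x ∈ swapList i S ↔ x ∈ S := by
  intro i
  induction i with
  | zero => intro S x; rfl
  | succ i ih =>
      intro S x
      simp only [swapList, List.mem_append, ih]
      constructor
      · intro h
        rcases h with ((h | h) | h) | h
        · exact List.mem_of_mem_take h
        · exact List.mem_of_mem_drop (List.mem_of_mem_drop (List.mem_of_mem_take h))
        · exact List.mem_of_mem_drop (List.mem_of_mem_take h)
        · exact List.mem_of_mem_drop (List.mem_of_mem_drop (List.mem_of_mem_drop h))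
      · intro h
        rw [← List.take_append_drop (4 ^ i) S, List.mem_append] at h
        rcases h with h | h
        · exact Or.inl (Or.inl (Or.inl h))
        · rw [← List.take_append_drop (4 ^ i) (S.drop (4 ^ i)), List.mem_append] at h
          rcases h with h | h
          · exact Or.inl (Or.inr h)
          · rw [← List.take_append_drop (4 ^ i) ((S.drop (4 ^ i)).drop (4 ^ i)),
              List.mem_append] at h
            rcases h with h | h
            · exact Or.inl (Or.inl (Or.inr h))
            · exact Or.inr h

theorem leafList_buildL : ∀ (m : ℕ) (S : List ℕ), S.length = 2 ^ m →
    (buildL m S).leafList = S := by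
  intro m
  induction m with
  | zero =>
      intro S hS
      rw [pow_zero, List.length_eq_one_iff] at hS
      obtain ⟨a, rfl⟩ := hS
      rfl
  | succ m ih =>
      intro S hS
      show (buildL m (S.take (2 ^ m))).leafList ++ (buildL m (S.drop (2 ^ m))).leafList = S
      have hp : 2 ^ m ≤ S.length := by
        rw [hS, pow_succ]; have : 0 < 2 ^ m := by positivity
        omega
      rw [ih _ (by rw [List.length_take]; omega),
        ih _ (by rw [List.length_drop]; rw [hS, pow_succ]; omega),
        List.take_append_drop]

/-- the four blocks of a `range'` of length `4^(k+1)`. -/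
theorem range'_blocks (s k : ℕ) :
    List.range' s (4 ^ (k + 1)) =
      List.range' s (4 ^ k) ++ List.range' (s + 4 ^ k) (4 ^ k) ++
      List.range' (s + 2 * 4 ^ k) (4 ^ k) ++ List.range' (s + 3 * 4 ^ k) (4 ^ k) := by
  have h1 : List.range' s (4 ^ k) ++ List.range' (s + 4 ^ k) (4 ^ k) =
      List.range' s (2 * 4 ^ k) := by
    have h := List.range'_append_1 (s := s) (m := 4 ^ k) (n := 4 ^ k)
    rw [show 4 ^ k + 4 ^ k = 2 * 4 ^ k by ring] at h
    exact h
  have h2 : List.range' s (2 * 4 ^ k) ++ List.range' (s + 2 * 4 ^ k) (4 ^ k) =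
      List.range' s (3 * 4 ^ k) := by
    have h := List.range'_append_1 (s := s) (m := 2 * 4 ^ k) (n := 4 ^ k)
    rw [show 2 * 4 ^ k + 4 ^ k = 3 * 4 ^ k by ring] at h
    exact h
  have h3 : List.range' s (3 * 4 ^ k) ++ List.range' (s + 3 * 4 ^ k) (4 ^ k) =
      List.range' s (4 ^ (k + 1)) := by
    have h := List.range'_append_1 (s := s) (m := 3 * 4 ^ k) (n := 4 ^ k)
    rw [show 3 * 4 ^ k + 4 ^ k = 4 ^ (k + 1) by ring] at h
    exact h
  rw [← h3, ← h2, ← h1]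

end RTree
namespace RTree

/-- the first tree of the construction, on block `[s, s + 4^k)`. -/
def Tone (k s : ℕ) : RTree ℕ := buildL (2 * k) (List.range' s (4 ^ k))

/-- the second tree of the construction, on block `[s, s + 4^k)`. -/
def Ttwo (k s : ℕ) : RTree ℕ := buildL (2 * k) (swapList k (List.range' s (4 ^ k)))

theorem pow42 (k : ℕ) : (4 : ℕ) ^ k = 2 ^ (2 * k) := by
  rw [show (4 : ℕ) = 2 ^ 2 by norm_num, ← pow_mul]

theorem Tone_succ (k s : ℕ) :
    Tone (k + 1) s = node (node (Tone k s) (Tone k (s + 4 ^ k)))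
      (node (Tone k (s + 2 * 4 ^ k)) (Tone k (s + 3 * 4 ^ k))) := by
  have lab : (List.range' s (4 ^ k) ++ List.range' (s + 4 ^ k) (4 ^ k)).length
      = 2 ^ (2 * k + 1) := by
    simp only [List.length_append, List.length_range']
    rw [pow42, pow_succ]
    ring
  have lA : (List.range' s (4 ^ k)).length = 2 ^ (2 * k) := by
    simp [List.length_range', pow42]
  have lC : (List.range' (s + 2 * 4 ^ k) (4 ^ k)).length = 2 ^ (2 * k) := by
    simp [List.length_range', pow42]
  unfold Tone
  rw [show 2 * (k + 1) = 2 * k + 1 + 1 by ring, range'_blocks s k,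
    List.append_assoc (List.range' s (4 ^ k) ++ List.range' (s + 4 ^ k) (4 ^ k))]
  simp only [buildL]
  rw [List.take_left' lab, List.drop_left' lab, List.take_left' lA, List.drop_left' lA,
    List.take_left' lC, List.drop_left' lC]

theorem swapList_blocks (k s : ℕ) :
    swapList (k + 1) (List.range' s (4 ^ (k + 1))) =
      swapList k (List.range' s (4 ^ k)) ++
      swapList k (List.range' (s + 2 * 4 ^ k) (4 ^ k)) ++
      swapList k (List.range' (s + 4 ^ k) (4 ^ k)) ++
      swapList k (List.range' (s + 3 * 4 ^ k) (4 ^ k)) := by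
  have lA : (List.range' s (4 ^ k)).length = 4 ^ k := List.length_range'
  have lB : (List.range' (s + 4 ^ k) (4 ^ k)).length = 4 ^ k := List.length_range'
  have lC : (List.range' (s + 2 * 4 ^ k) (4 ^ k)).length = 4 ^ k := List.length_range'
  show swapList k _ ++ swapList k _ ++ swapList k _ ++ swapList k _ = _
  rw [range'_blocks s k]
  simp only [List.append_assoc]
  -- now the list is A ++ (B ++ (C ++ D))
  rw [List.take_left' lA, List.drop_left' lA, List.take_left' lB, List.drop_left' lB,
    List.take_left' lC, List.drop_left' lC]

theorem Ttwo_succ (k s : ℕ) :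
    Ttwo (k + 1) s = node (node (Ttwo k s) (Ttwo k (s + 2 * 4 ^ k)))
      (node (Ttwo k (s + 4 ^ k)) (Ttwo k (s + 3 * 4 ^ k))) := by
  have lw : ∀ t : ℕ, (swapList k (List.range' t (4 ^ k))).length = 4 ^ k := by
    intro t
    rw [length_swapList, List.length_range']
  have lab : (swapList k (List.range' s (4 ^ k)) ++
      swapList k (List.range' (s + 2 * 4 ^ k) (4 ^ k))).length = 2 ^ (2 * k + 1) := by
    simp only [List.length_append, lw]
    rw [pow42, pow_succ]
    ring
  have lA : (swapList k (List.range' s (4 ^ k))).length = 2 ^ (2 * k) := by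
    rw [lw, pow42]
  have lB : (swapList k (List.range' (s + 4 ^ k) (4 ^ k))).length = 2 ^ (2 * k) := by
    rw [lw, pow42]
  unfold Ttwo
  rw [show 2 * (k + 1) = 2 * k + 1 + 1 by ring, swapList_blocks k s,
    List.append_assoc (swapList k (List.range' s (4 ^ k)) ++
      swapList k (List.range' (s + 2 * 4 ^ k) (4 ^ k)))]
  simp only [buildL]
  rw [List.take_left' lab, List.drop_left' lab, List.take_left' lA, List.drop_left' lA,
    List.take_left' lB, List.drop_left' lB]

theorem mem_Tone {k s x : ℕ} : x ∈ (Tone k s).leafList ↔ s ≤ x ∧ x < s + 4 ^ k := by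
  rw [Tone, leafList_buildL _ _ (by rw [List.length_range', pow42]), mem_range1]

theorem mem_Ttwo {k s x : ℕ} : x ∈ (Ttwo k s).leafList ↔ s ≤ x ∧ x < s + 4 ^ k := by
  rw [Ttwo, leafList_buildL _ _ (by rw [length_swapList, List.length_range', pow42]),
    mem_swapList, mem_range1]

theorem leafSet_ToneTtwo (k s : ℕ) : (Tone k s).leafSet = (Ttwo k s).leafSet := by
  ext x
  rw [mem_leafSet, mem_leafSet, mem_Tone, mem_Ttwo]

theorem Tone_disj {k : ℕ} {s t : ℕ} (h : s + 4 ^ k ≤ t ∨ t + 4 ^ k ≤ s) :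
    ∀ x, x ∈ (Tone k s).leafSet → x ∉ (Tone k t).leafSet := by
  intro x hx hx'
  rw [mem_leafSet, mem_Tone] at hx hx'
  omega

end RTree
namespace RTree

variable {L : Type}

theorem split_embed {s₁ s₂ X Y : RTree L} (h : Embeds (node s₁ s₂) (node X Y))
    (h₁ : ∀ z ∈ s₁.leafList, z ∉ Y.leafList)
    (h₂ : ∀ z ∈ s₂.leafList, z ∉ X.leafList) :
    Embeds s₁ X ∧ Embeds s₂ Y := by
  cases h with
  | left h' =>
      exfalso
      obtain ⟨z, hz⟩ := exists_leaf s₂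
      exact h₂ z hz (h'.mem_leafList z (by simp [hz]))
  | right h' =>
      exfalso
      obtain ⟨z, hz⟩ := exists_leaf s₁
      exact h₁ z hz (h'.mem_leafList z (by simp [hz]))
  | pair ha hb => exact ⟨ha, hb⟩
  | pair_swap ha hb =>
      exfalso
      obtain ⟨z, hz⟩ := exists_leaf s₁
      exact h₁ z hz (ha.mem_leafList z hz)

theorem split_embed_swap {s₁ s₂ X Y : RTree L} (h : Embeds (node s₁ s₂) (node X Y))
    (h₁ : ∀ z ∈ s₁.leafList, z ∉ X.leafList)
    (h₂ : ∀ z ∈ s₂.leafList, z ∉ Y.leafList) :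
    Embeds s₁ Y ∧ Embeds s₂ X := by
  cases h with
  | left h' =>
      exfalso
      obtain ⟨z, hz⟩ := exists_leaf s₁
      exact h₁ z hz (h'.mem_leafList z (by simp [hz]))
  | right h' =>
      exfalso
      obtain ⟨z, hz⟩ := exists_leaf s₂
      exact h₂ z hz (h'.mem_leafList z (by simp [hz]))
  | pair ha hb =>
      exfalso
      obtain ⟨z, hz⟩ := exists_leaf s₁
      exact h₁ z hz (ha.mem_leafList z hz)
  | pair_swap ha hb => exact ⟨ha, hb⟩

set_option maxHeartbeats 2000000 in
theorem root_step
    {B₁ B₂ B₃ B₄ C₁ C₂ C₃ C₄ : RTree L} {R : ℕ}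
    (hs₁ : B₁.leafSet = C₁.leafSet) (hs₂ : B₂.leafSet = C₂.leafSet)
    (hs₃ : B₃.leafSet = C₃.leafSet) (hs₄ : B₄.leafSet = C₄.leafSet)
    (d12 : ∀ x, x ∈ B₁.leafSet → x ∉ B₂.leafSet)
    (d13 : ∀ x, x ∈ B₁.leafSet → x ∉ B₃.leafSet)
    (d14 : ∀ x, x ∈ B₁.leafSet → x ∉ B₄.leafSet)
    (d23 : ∀ x, x ∈ B₂.leafSet → x ∉ B₃.leafSet)
    (d24 : ∀ x, x ∈ B₂.leafSet → x ∉ B₄.leafSet)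
    (d34 : ∀ x, x ∈ B₃.leafSet → x ∉ B₄.leafSet)
    (hb₁ : ∀ S : RTree L, Embeds S B₁ → Embeds S C₁ → S.numLeaves ≤ R)
    (hb₂ : ∀ S : RTree L, Embeds S B₂ → Embeds S C₂ → S.numLeaves ≤ R)
    (hb₃ : ∀ S : RTree L, Embeds S B₃ → Embeds S C₃ → S.numLeaves ≤ R)
    (hb₄ : ∀ S : RTree L, Embeds S B₄ → Embeds S C₄ → S.numLeaves ≤ R) :
    ∀ S : RTree L,
      Embeds S (node (node B₁ B₂) (node B₃ B₄)) →
      Embeds S (node (node C₁ C₃) (node C₂ C₄)) →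
      S.numLeaves ≤ 2 * R := by
  have memsplit : ∀ {t P Q : RTree L}, Embeds t (node P Q) →
      ∀ x ∈ t.leafList, x ∈ P.leafList ∨ x ∈ Q.leafList :=
    fun h x hx => List.mem_append.mp (h.mem_leafList x hx)
  have c1b : ∀ x, x ∈ C₁.leafList → x ∈ B₁.leafSet := fun x hx => by rw [hs₁]; exact hx
  have c2b : ∀ x, x ∈ C₂.leafList → x ∈ B₂.leafSet := fun x hx => by rw [hs₂]; exact hx
  have c3b : ∀ x, x ∈ C₃.leafList → x ∈ B₃.leafSet := fun x hx => by rw [hs₃]; exact hx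
  have c4b : ∀ x, x ∈ C₄.leafList → x ∈ B₄.leafSet := fun x hx => by rw [hs₄]; exact hx
  have b1c : ∀ x, x ∈ B₁.leafSet → x ∉ C₃.leafList := fun x hx hC => d13 x hx (c3b x hC)
  have b2c : ∀ x, x ∈ B₂.leafSet → x ∉ C₄.leafList := fun x hx hC => d24 x hx (c4b x hC)
  have b3c : ∀ x, x ∈ B₃.leafSet → x ∉ C₁.leafList := fun x hx hC => d13 x (c1b x hC) hx
  have b4c : ∀ x, x ∈ B₄.leafSet → x ∉ C₂.leafList := fun x hx hC => d24 x (c2b x hC) hx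
  intro S hE1 hE2
  cases hE1 with
  | left h1 =>
    cases hE2 with
    | left h2 =>
      have m1 : ∀ x ∈ S.leafList, x ∈ B₁.leafSet := by
        intro x hx
        rcases memsplit h1 x hx with h | h
        · exact h
        · exfalso
          rcases memsplit h2 x hx with h' | h'
          · exact d12 x (c1b x h') h
          · exact d23 x h (c3b x h')
      have e1 : Embeds S B₁ := prune_right h1 (fun x hx hB => d12 x (m1 x hx) hB)
      have e2 : Embeds S C₁ := prune_right h2 (fun x hx hC => b1c x (m1 x hx) hC)
      exact le_trans (hb₁ S e1 e2) (by omega)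
    | right h2 =>
      have m2 : ∀ x ∈ S.leafList, x ∈ B₂.leafSet := by
        intro x hx
        rcases memsplit h1 x hx with h | h
        · exfalso
          rcases memsplit h2 x hx with h' | h'
          · exact d12 x h (c2b x h')
          · exact d14 x h (c4b x h')
        · exact h
      have e1 : Embeds S B₂ := prune_left h1 (fun x hx hB => d12 x hB (m2 x hx))
      have e2 : Embeds S C₂ := prune_right h2 (fun x hx hC => b2c x (m2 x hx) hC)
      exact le_trans (hb₂ S e1 e2) (by omega)
    | @pair s₁ s₂ _ _ h2a h2b =>
      -- s₁ ⪯ node C₁ C₃, s₂ ⪯ node C₂ C₄ ; S ⪯ node B₁ B₂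
      have m₁ : ∀ x ∈ s₁.leafList, x ∈ B₁.leafSet := by
        intro x hx
        rcases memsplit h1 x (by simp [hx]) with h | h
        · exact h
        · exfalso
          rcases memsplit h2a x hx with h' | h'
          · exact d12 x (c1b x h') h
          · exact d23 x h (c3b x h')
      have m₂ : ∀ x ∈ s₂.leafList, x ∈ B₂.leafSet := by
        intro x hx
        rcases memsplit h1 x (by simp [hx]) with h | h
        · exfalso
          rcases memsplit h2b x hx with h' | h'
          · exact d12 x h (c2b x h')
          · exact d14 x h (c4b x h')
        · exact h
      obtain ⟨f₁, f₂⟩ := split_embed h1 (fun z hz hB => d12 z (m₁ z hz) hB)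
        (fun z hz hB => d12 z hB (m₂ z hz))
      have g₁ : Embeds s₁ C₁ := prune_right h2a (fun z hz hC => b1c z (m₁ z hz) hC)
      have g₂ : Embeds s₂ C₂ := prune_right h2b (fun z hz hC => b2c z (m₂ z hz) hC)
      have := hb₁ s₁ f₁ g₁
      have := hb₂ s₂ f₂ g₂
      simp only [numLeaves_node]
      omega
    | @pair_swap s₁ s₂ _ _ h2a h2b =>
      -- s₁ ⪯ node C₂ C₄, s₂ ⪯ node C₁ C₃
      have m₁ : ∀ x ∈ s₁.leafList, x ∈ B₂.leafSet := by
        intro x hx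
        rcases memsplit h1 x (by simp [hx]) with h | h
        · exfalso
          rcases memsplit h2a x hx with h' | h'
          · exact d12 x h (c2b x h')
          · exact d14 x h (c4b x h')
        · exact h
      have m₂ : ∀ x ∈ s₂.leafList, x ∈ B₁.leafSet := by
        intro x hx
        rcases memsplit h1 x (by simp [hx]) with h | h
        · exact h
        · exfalso
          rcases memsplit h2b x hx with h' | h'
          · exact d12 x (c1b x h') h
          · exact d23 x h (c3b x h')
      obtain ⟨f₁, f₂⟩ := split_embed_swap h1 (fun z hz hB => d12 z hB (m₁ z hz))
        (fun z hz hB => d12 z (m₂ z hz) hB)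
      have g₁ : Embeds s₁ C₂ := prune_right h2a (fun z hz hC => b2c z (m₁ z hz) hC)
      have g₂ : Embeds s₂ C₁ := prune_right h2b (fun z hz hC => b1c z (m₂ z hz) hC)
      have := hb₂ s₁ f₁ g₁
      have := hb₁ s₂ f₂ g₂
      simp only [numLeaves_node]
      omega
  | right h1 =>
    cases hE2 with
    | left h2 =>
      have m3 : ∀ x ∈ S.leafList, x ∈ B₃.leafSet := by
        intro x hx
        rcases memsplit h1 x hx with h | h
        · exact h
        · exfalso
          rcases memsplit h2 x hx with h' | h'
          · exact d14 x (c1b x h') h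
          · exact d34 x (c3b x h') h
      have e1 : Embeds S B₃ := prune_right h1 (fun x hx hB => d34 x (m3 x hx) hB)
      have e2 : Embeds S C₃ := prune_left h2 (fun x hx hC => b3c x (m3 x hx) hC)
      exact le_trans (hb₃ S e1 e2) (by omega)
    | right h2 =>
      have m4 : ∀ x ∈ S.leafList, x ∈ B₄.leafSet := by
        intro x hx
        rcases memsplit h1 x hx with h | h
        · exfalso
          rcases memsplit h2 x hx with h' | h'
          · exact d23 x (c2b x h') h
          · exact d34 x h (c4b x h')
        · exact h
      have e1 : Embeds S B₄ := prune_left h1 (fun x hx hB => d34 x hB (m4 x hx))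
      have e2 : Embeds S C₄ := prune_left h2 (fun x hx hC => b4c x (m4 x hx) hC)
      exact le_trans (hb₄ S e1 e2) (by omega)
    | @pair s₁ s₂ _ _ h2a h2b =>
      -- s₁ ⪯ node C₁ C₃, s₂ ⪯ node C₂ C₄ ; S ⪯ node B₃ B₄
      have m₁ : ∀ x ∈ s₁.leafList, x ∈ B₃.leafSet := by
        intro x hx
        rcases memsplit h1 x (by simp [hx]) with h | h
        · exact h
        · exfalso
          rcases memsplit h2a x hx with h' | h'
          · exact d14 x (c1b x h') h
          · exact d34 x (c3b x h') h
      have m₂ : ∀ x ∈ s₂.leafList, x ∈ B₄.leafSet := by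
        intro x hx
        rcases memsplit h1 x (by simp [hx]) with h | h
        · exfalso
          rcases memsplit h2b x hx with h' | h'
          · exact d23 x (c2b x h') h
          · exact d34 x h (c4b x h')
        · exact h
      obtain ⟨f₁, f₂⟩ := split_embed h1 (fun z hz hB => d34 z (m₁ z hz) hB)
        (fun z hz hB => d34 z hB (m₂ z hz))
      have g₁ : Embeds s₁ C₃ := prune_left h2a (fun z hz hC => b3c z (m₁ z hz) hC)
      have g₂ : Embeds s₂ C₄ := prune_left h2b (fun z hz hC => b4c z (m₂ z hz) hC)
      have := hb₃ s₁ f₁ g₁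
      have := hb₄ s₂ f₂ g₂
      simp only [numLeaves_node]
      omega
    | @pair_swap s₁ s₂ _ _ h2a h2b =>
      -- s₁ ⪯ node C₂ C₄, s₂ ⪯ node C₁ C₃ ; S ⪯ node B₃ B₄
      have m₁ : ∀ x ∈ s₁.leafList, x ∈ B₄.leafSet := by
        intro x hx
        rcases memsplit h1 x (by simp [hx]) with h | h
        · exfalso
          rcases memsplit h2a x hx with h' | h'
          · exact d23 x (c2b x h') h
          · exact d34 x h (c4b x h')
        · exact h
      have m₂ : ∀ x ∈ s₂.leafList, x ∈ B₃.leafSet := by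
        intro x hx
        rcases memsplit h1 x (by simp [hx]) with h | h
        · exact h
        · exfalso
          rcases memsplit h2b x hx with h' | h'
          · exact d14 x (c1b x h') h
          · exact d34 x (c3b x h') h
      obtain ⟨f₁, f₂⟩ := split_embed_swap h1 (fun z hz hB => d34 z hB (m₁ z hz))
        (fun z hz hB => d34 z (m₂ z hz) hB)
      have g₁ : Embeds s₁ C₄ := prune_left h2a (fun z hz hC => b4c z (m₁ z hz) hC)
      have g₂ : Embeds s₂ C₃ := prune_left h2b (fun z hz hC => b3c z (m₂ z hz) hC)
      have := hb₄ s₁ f₁ g₁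
      have := hb₃ s₂ f₂ g₂
      simp only [numLeaves_node]
      omega
  | @pair s₁ s₂ _ _ h1a h1b =>
    -- s₁ ⪯ node B₁ B₂, s₂ ⪯ node B₃ B₄
    cases hE2 with
    | left h2 =>
      have m₁ : ∀ x ∈ s₁.leafList, x ∈ B₁.leafSet := by
        intro x hx
        rcases memsplit h1a x hx with h | h
        · exact h
        · exfalso
          rcases memsplit h2 x (by simp [hx]) with h' | h'
          · exact d12 x (c1b x h') h
          · exact d23 x h (c3b x h')
      have m₂ : ∀ x ∈ s₂.leafList, x ∈ B₃.leafSet := by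
        intro x hx
        rcases memsplit h1b x hx with h | h
        · exact h
        · exfalso
          rcases memsplit h2 x (by simp [hx]) with h' | h'
          · exact d14 x (c1b x h') h
          · exact d34 x (c3b x h') h
      have f₁ : Embeds s₁ B₁ := prune_right h1a (fun z hz hB => d12 z (m₁ z hz) hB)
      have f₂ : Embeds s₂ B₃ := prune_right h1b (fun z hz hB => d34 z (m₂ z hz) hB)
      obtain ⟨g₁, g₂⟩ := split_embed h2 (fun z hz hC => b1c z (m₁ z hz) hC)
        (fun z hz hC => b3c z (m₂ z hz) hC)
      have := hb₁ s₁ f₁ g₁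
      have := hb₃ s₂ f₂ g₂
      simp only [numLeaves_node]
      omega
    | right h2 =>
      have m₁ : ∀ x ∈ s₁.leafList, x ∈ B₂.leafSet := by
        intro x hx
        rcases memsplit h1a x hx with h | h
        · exfalso
          rcases memsplit h2 x (by simp [hx]) with h' | h'
          · exact d12 x h (c2b x h')
          · exact d14 x h (c4b x h')
        · exact h
      have m₂ : ∀ x ∈ s₂.leafList, x ∈ B₄.leafSet := by
        intro x hx
        rcases memsplit h1b x hx with h | h
        · exfalso
          rcases memsplit h2 x (by simp [hx]) with h' | h'
          · exact d23 x (c2b x h') h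
          · exact d34 x h (c4b x h')
        · exact h
      have f₁ : Embeds s₁ B₂ := prune_left h1a (fun z hz hB => d12 z hB (m₁ z hz))
      have f₂ : Embeds s₂ B₄ := prune_left h1b (fun z hz hB => d34 z hB (m₂ z hz))
      obtain ⟨g₁, g₂⟩ := split_embed h2 (fun z hz hC => b2c z (m₁ z hz) hC)
        (fun z hz hC => b4c z (m₂ z hz) hC)
      have := hb₂ s₁ f₁ g₁
      have := hb₄ s₂ f₂ g₂
      simp only [numLeaves_node]
      omega
    | pair h2a h2b =>
      -- s₁ = s₁, s₂ = s₂ up to constructor injectivity (they are the same subtrees)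
      have m₁ : ∀ x ∈ s₁.leafList, x ∈ B₁.leafSet := by
        intro x hx
        rcases memsplit h1a x hx with h | h
        · exact h
        · exfalso
          rcases memsplit h2a x hx with h' | h'
          · exact d12 x (c1b x h') h
          · exact d23 x h (c3b x h')
      have m₂ : ∀ x ∈ s₂.leafList, x ∈ B₄.leafSet := by
        intro x hx
        rcases memsplit h1b x hx with h | h
        · exfalso
          rcases memsplit h2b x hx with h' | h'
          · exact d23 x (c2b x h') h
          · exact d34 x h (c4b x h')
        · exact h
      have f₁ : Embeds s₁ B₁ := prune_right h1a (fun z hz hB => d12 z (m₁ z hz) hB)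
      have f₂ : Embeds s₂ B₄ := prune_left h1b (fun z hz hB => d34 z hB (m₂ z hz))
      have g₁ : Embeds s₁ C₁ := prune_right h2a (fun z hz hC => b1c z (m₁ z hz) hC)
      have g₂ : Embeds s₂ C₄ := prune_left h2b (fun z hz hC => b4c z (m₂ z hz) hC)
      have := hb₁ s₁ f₁ g₁
      have := hb₄ s₂ f₂ g₂
      simp only [numLeaves_node]
      omega
    | pair_swap h2a h2b =>
      -- s₁ ⪯ node C₂ C₄, s₂ ⪯ node C₁ C₃
      have m₁ : ∀ x ∈ s₁.leafList, x ∈ B₂.leafSet := by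
        intro x hx
        rcases memsplit h1a x hx with h | h
        · exfalso
          rcases memsplit h2a x hx with h' | h'
          · exact d12 x h (c2b x h')
          · exact d14 x h (c4b x h')
        · exact h
      have m₂ : ∀ x ∈ s₂.leafList, x ∈ B₃.leafSet := by
        intro x hx
        rcases memsplit h1b x hx with h | h
        · exact h
        · exfalso
          rcases memsplit h2b x hx with h' | h'
          · exact d14 x (c1b x h') h
          · exact d34 x (c3b x h') h
      have f₁ : Embeds s₁ B₂ := prune_left h1a (fun z hz hB => d12 z hB (m₁ z hz))
      have f₂ : Embeds s₂ B₃ := prune_right h1b (fun z hz hB => d34 z (m₂ z hz) hB)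
      have g₁ : Embeds s₁ C₂ := prune_right h2a (fun z hz hC => b2c z (m₁ z hz) hC)
      have g₂ : Embeds s₂ C₃ := prune_left h2b (fun z hz hC => b3c z (m₂ z hz) hC)
      have := hb₂ s₁ f₁ g₁
      have := hb₃ s₂ f₂ g₂
      simp only [numLeaves_node]
      omega
  | @pair_swap s₁ s₂ _ _ h1a h1b =>
    -- s₁ ⪯ node B₃ B₄, s₂ ⪯ node B₁ B₂
    cases hE2 with
    | left h2 =>
      have m₁ : ∀ x ∈ s₁.leafList, x ∈ B₃.leafSet := by
        intro x hx
        rcases memsplit h1a x hx with h | h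
        · exact h
        · exfalso
          rcases memsplit h2 x (by simp [hx]) with h' | h'
          · exact d14 x (c1b x h') h
          · exact d34 x (c3b x h') h
      have m₂ : ∀ x ∈ s₂.leafList, x ∈ B₁.leafSet := by
        intro x hx
        rcases memsplit h1b x hx with h | h
        · exact h
        · exfalso
          rcases memsplit h2 x (by simp [hx]) with h' | h'
          · exact d12 x (c1b x h') h
          · exact d23 x h (c3b x h')
      have f₁ : Embeds s₁ B₃ := prune_right h1a (fun z hz hB => d34 z (m₁ z hz) hB)
      have f₂ : Embeds s₂ B₁ := prune_right h1b (fun z hz hB => d12 z (m₂ z hz) hB)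
      obtain ⟨g₁, g₂⟩ := split_embed_swap h2 (fun z hz hC => b3c z (m₁ z hz) hC)
        (fun z hz hC => b1c z (m₂ z hz) hC)
      -- g₁ : s₁ ⪯ C₃, g₂ : s₂ ⪯ C₁
      have := hb₃ s₁ f₁ g₁
      have := hb₁ s₂ f₂ g₂
      simp only [numLeaves_node]
      omega
    | right h2 =>
      have m₁ : ∀ x ∈ s₁.leafList, x ∈ B₄.leafSet := by
        intro x hx
        rcases memsplit h1a x hx with h | h
        · exfalso
          rcases memsplit h2 x (by simp [hx]) with h' | h'
          · exact d23 x (c2b x h') h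
          · exact d34 x h (c4b x h')
        · exact h
      have m₂ : ∀ x ∈ s₂.leafList, x ∈ B₂.leafSet := by
        intro x hx
        rcases memsplit h1b x hx with h | h
        · exfalso
          rcases memsplit h2 x (by simp [hx]) with h' | h'
          · exact d12 x h (c2b x h')
          · exact d14 x h (c4b x h')
        · exact h
      have f₁ : Embeds s₁ B₄ := prune_left h1a (fun z hz hB => d34 z hB (m₁ z hz))
      have f₂ : Embeds s₂ B₂ := prune_left h1b (fun z hz hB => d12 z hB (m₂ z hz))
      obtain ⟨g₁, g₂⟩ := split_embed_swap h2 (fun z hz hC => b4c z (m₁ z hz) hC)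
        (fun z hz hC => b2c z (m₂ z hz) hC)
      have := hb₄ s₁ f₁ g₁
      have := hb₂ s₂ f₂ g₂
      simp only [numLeaves_node]
      omega
    | pair h2a h2b =>
      -- s₁ ⪯ node C₁ C₃ and s₁ ⪯ node B₃ B₄
      have m₁ : ∀ x ∈ s₁.leafList, x ∈ B₃.leafSet := by
        intro x hx
        rcases memsplit h1a x hx with h | h
        · exact h
        · exfalso
          rcases memsplit h2a x hx with h' | h'
          · exact d14 x (c1b x h') h
          · exact d34 x (c3b x h') h
      have m₂ : ∀ x ∈ s₂.leafList, x ∈ B₂.leafSet := by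
        intro x hx
        rcases memsplit h1b x hx with h | h
        · exfalso
          rcases memsplit h2b x hx with h' | h'
          · exact d12 x h (c2b x h')
          · exact d14 x h (c4b x h')
        · exact h
      have f₁ : Embeds s₁ B₃ := prune_right h1a (fun z hz hB => d34 z (m₁ z hz) hB)
      have f₂ : Embeds s₂ B₂ := prune_left h1b (fun z hz hB => d12 z hB (m₂ z hz))
      have g₁ : Embeds s₁ C₃ := prune_left h2a (fun z hz hC => b3c z (m₁ z hz) hC)
      have g₂ : Embeds s₂ C₂ := prune_right h2b (fun z hz hC => b2c z (m₂ z hz) hC)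
      have := hb₃ s₁ f₁ g₁
      have := hb₂ s₂ f₂ g₂
      simp only [numLeaves_node]
      omega
    | pair_swap h2a h2b =>
      -- s₁ ⪯ node C₂ C₄ and s₁ ⪯ node B₃ B₄
      have m₁ : ∀ x ∈ s₁.leafList, x ∈ B₄.leafSet := by
        intro x hx
        rcases memsplit h1a x hx with h | h
        · exfalso
          rcases memsplit h2a x hx with h' | h'
          · exact d23 x (c2b x h') h
          · exact d34 x h (c4b x h')
        · exact h
      have m₂ : ∀ x ∈ s₂.leafList, x ∈ B₁.leafSet := by
        intro x hx
        rcases memsplit h1b x hx with h | h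
        · exact h
        · exfalso
          rcases memsplit h2b x hx with h' | h'
          · exact d12 x (c1b x h') h
          · exact d23 x h (c3b x h')
      have f₁ : Embeds s₁ B₄ := prune_left h1a (fun z hz hB => d34 z hB (m₁ z hz))
      have f₂ : Embeds s₂ B₁ := prune_right h1b (fun z hz hB => d12 z (m₂ z hz) hB)
      have g₁ : Embeds s₁ C₄ := prune_left h2a (fun z hz hC => b4c z (m₁ z hz) hC)
      have g₂ : Embeds s₂ C₁ := prune_right h2b (fun z hz hC => b1c z (m₂ z hz) hC)
      have := hb₄ s₁ f₁ g₁
      have := hb₁ s₂ f₂ g₂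
      simp only [numLeaves_node]
      omega

end RTree
namespace RTree

theorem root_bound : ∀ (k s : ℕ) (S : RTree ℕ),
    Embeds S (Tone k s) → Embeds S (Ttwo k s) → S.numLeaves ≤ 2 ^ k := by
  intro k
  induction k with
  | zero =>
      intro s S h1 _
      have e : Tone 0 s = leaf ((List.range' s 1).headI) := rfl
      rw [e] at h1
      rw [embeds_leaf_inv h1]
      simp [numLeaves, leafList]
  | succ k ih =>
      intro s S h1 h2
      rw [Tone_succ] at h1
      rw [Ttwo_succ] at h2
      have hpos : 0 < 4 ^ k := by positivity
      have h := root_step (leafSet_ToneTtwo k s) (leafSet_ToneTtwo k (s + 4 ^ k))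
        (leafSet_ToneTtwo k (s + 2 * 4 ^ k)) (leafSet_ToneTtwo k (s + 3 * 4 ^ k))
        (Tone_disj (Or.inl (by omega))) (Tone_disj (Or.inl (by omega)))
        (Tone_disj (Or.inl (by omega))) (Tone_disj (Or.inl (by omega)))
        (Tone_disj (Or.inl (by omega))) (Tone_disj (Or.inl (by omega)))
        (ih s) (ih (s + 4 ^ k)) (ih (s + 2 * 4 ^ k)) (ih (s + 3 * 4 ^ k))
        S h1 h2
      rw [pow_succ]
      omega

theorem key_bound : ∀ (k s : ℕ) (S₁ S₂ : RTree ℕ), S₁.IsPhylo → URel S₁ S₂ →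
    Embeds S₁ (Tone k s) → Embeds S₂ (Ttwo k s) →
    S₁.numLeaves ≤ 3 * 2 ^ (k - 1) := by
  intro k
  induction k with
  | zero =>
      intro s S₁ S₂ _ _ h1 _
      have e : Tone 0 s = leaf ((List.range' s 1).headI) := rfl
      rw [e] at h1
      rw [embeds_leaf_inv h1]
      simp [numLeaves, leafList]
  | succ k ih =>
      intro s S₁ S₂ hphy hUr h1 h2
      rw [Tone_succ] at h1
      rw [Ttwo_succ] at h2
      have hpos : 0 < 4 ^ k := by positivity
      have h := main_step (leafSet_ToneTtwo k s) (leafSet_ToneTtwo k (s + 4 ^ k))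
        (leafSet_ToneTtwo k (s + 2 * 4 ^ k)) (leafSet_ToneTtwo k (s + 3 * 4 ^ k))
        (Tone_disj (Or.inl (by omega))) (Tone_disj (Or.inl (by omega)))
        (Tone_disj (Or.inl (by omega))) (Tone_disj (Or.inl (by omega)))
        (Tone_disj (Or.inl (by omega))) (Tone_disj (Or.inl (by omega)))
        (root_bound k s) (root_bound k (s + 4 ^ k)) (root_bound k (s + 2 * 4 ^ k))
        (root_bound k (s + 3 * 4 ^ k))
        (ih s) (ih (s + 4 ^ k)) (ih (s + 2 * 4 ^ k)) (ih (s + 3 * 4 ^ k))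
        S₁ S₂ hphy hUr h1 h2
      have hm : 3 * 2 ^ (k - 1) ≤ 3 * 2 ^ k :=
        Nat.mul_le_mul_left 3 (Nat.pow_le_pow_right (by norm_num) (by omega))
      have : S₁.numLeaves ≤ 3 * 2 ^ k := le_trans h (max_le hm le_rfl)
      simpa using this

end RTree
/-- For `k > 0`, let `T₁` be the unrooted binary phylogenetic tree
obtained by suppressing the root of the rooted balanced binary tree of height `2k`
whose leaves from left to right are `1, 2, …, 4^k`, and let `T₂` be obtained likewise
from the rooted balanced binary tree with leaf sequence `swap(1, 2, …, 4^k)`.  Then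
`T₁` and `T₂` have no agreement subtree with more than `3·2^(k-1)` leaves,
i.e. `mast{T₁,T₂} ≤ 3·2^(k-1)`. -/
theorem stmt_17 (k : ℕ) (hk : 0 < k) :
    RTree.umast (buildL (2 * k) (List.range' 1 (4 ^ k)))
        (buildL (2 * k) (swapList k (List.range' 1 (4 ^ k)))) ≤ 3 * 2 ^ (k - 1) := by
  refine csSup_le' ?_
  rintro n ⟨S₁, S₂, hp1, -, e1, e2, hu, rfl⟩
  exact RTree.key_bound k 1 S₁ S₂ hp1 hu e1 e2
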